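/- arXiv:1109.5760 — 3 statements merged into one kernel-verified Lean document; each statement's English description precedes it below -/
import Mathlib

section
/- Let 0 → L → M → N → 0 be a short exact sequence of graded A-modules with M generated in degree s. Then L is generated in degree s if and only if JM ∩ L = JL, where J = ⊕_{i≥1} A_i. -/
open DirectSum CategoryTheory

namespace GenK

variable (k A : Type) [Field k] [Ring A] [Algebra k A] (𝒜 : ℕ → Submodule k A)

/-- The ideal `J = ⊕_{i ≥ 1} A_i`, as the left ideal generated by the
positive-degree homogeneous components. -/
noncomputable def Jideal : Ideal A :=
  Submodule.span A (⋃ i : ℕ, ((𝒜 (i + 1) : Submodule k A) : Set A))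

/-- A locally finite graded module over the graded algebra `A = ⊕ 𝒜 i`. -/
structure GMod [GradedAlgebra 𝒜] where
  M : Type
  [acg : AddCommGroup M]
  [modA : Module A M]
  [modk : Module k M]
  [tower : IsScalarTower k A M]
  gr : ℕ → Submodule k M
  [decomp : DirectSum.Decomposition gr]
  [gsmul : SetLike.GradedSMul 𝒜 gr]
  locFin : ∀ i, FiniteDimensional k (gr i)

attribute [instance] GMod.acg GMod.modA GMod.modk GMod.tower GMod.decomp GMod.gsmul

variable {k A 𝒜} [GradedAlgebra 𝒜]

/-- A graded module is generated in degree `s` if `M = A · M_s`. -/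
def GMod.gen (N : GMod k A 𝒜) (s : ℕ) : Prop :=
  Submodule.span A ((N.gr s : Submodule k N.M) : Set N.M) = ⊤

instance (N : GMod k A 𝒜) (i : ℕ) : SMul (𝒜 0) (N.gr i) :=
  ⟨fun a m => ⟨(a : A) • (m : N.M), by
    have h := SetLike.GradedSMul.smul_mem (A := 𝒜) (B := N.gr) a.2 m.2
    simpa using h⟩⟩

@[simp] lemma GMod.smul_coe (N : GMod k A 𝒜) (i : ℕ) (a : 𝒜 0) (m : N.gr i) :
    ((a • m : N.gr i) : N.M) = (a : A) • (m : N.M) := rfl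

/-- The degree `i` component of a graded module is a module over `A₀ = 𝒜 0`. -/
instance (N : GMod k A 𝒜) (i : ℕ) : Module (𝒜 0) (N.gr i) where
  one_smul m := Subtype.ext (by simp)
  mul_smul a b m := Subtype.ext (by simp [mul_smul])
  smul_zero a := Subtype.ext (by simp)
  smul_add a m n := Subtype.ext (by simp)
  add_smul a b m := Subtype.ext (by simp [add_smul])
  zero_smul m := Subtype.ext (by simp)

/-- A tower of minimal graded projective covers computing the graded syzygies
`N i = Ω^i(M₀)`, with `P i` a graded projective cover of `N i`. -/
structure SyzTower (M₀ : GMod k A 𝒜) where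
  N : ℕ → GMod k A 𝒜
  zero : N 0 = M₀
  P : ℕ → GMod k A 𝒜
  proj : ∀ i, Module.Projective A (P i).M
  p : ∀ i, (P i).M →ₗ[A] (N i).M
  surj : ∀ i, Function.Surjective (p i)
  graded : ∀ i j, ∀ x ∈ (P i).gr j, p i x ∈ (N i).gr j
  small : ∀ i (Q : Submodule A (P i).M), Q ⊔ LinearMap.ker (p i) = ⊤ → Q = ⊤
  ι : ∀ i, (N (i + 1)).M →ₗ[A] (P i).M
  inj : ∀ i, Function.Injective (ι i)
  rng : ∀ i, LinearMap.range (ι i) = LinearMap.ker (p i)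
  gr_eq : ∀ i j, (N (i + 1)).gr j = ((P i).gr j).comap ((ι i).restrictScalars k)

/-- `M` is a Koszul module: it is generated in degree 0 and has a (minimal) graded
projective resolution whose `i`-th term is generated in degree `i`. -/
def IsKoszul (M₀ : GMod k A 𝒜) : Prop :=
  M₀.gen 0 ∧ ∃ T : SyzTower M₀, ∀ i, (T.P i).gen i

open Classical in
noncomputable def pr (X : GMod k A 𝒜) (j : ℕ) : X.M →+ X.M where
  toFun x := (DirectSum.decompose X.gr x j : X.M)
  map_zero' := by simp
  map_add' x y := by simp

lemma pr_of_mem (X : GMod k A 𝒜) {j : ℕ} {x : X.M} (hx : x ∈ X.gr j) : pr X j x = x := by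
  simpa [pr] using DirectSum.decompose_of_mem_same X.gr hx

lemma pr_of_mem_ne (X : GMod k A 𝒜) {i j : ℕ} {x : X.M} (hx : x ∈ X.gr i) (h : i ≠ j) :
    pr X j x = 0 := by
  simpa [pr] using DirectSum.decompose_of_mem_ne X.gr hx h

lemma pr_mem (X : GMod k A 𝒜) (j : ℕ) (x : X.M) : pr X j x ∈ X.gr j :=
  (DirectSum.decompose X.gr x j).2

open Classical in
lemma sum_pr (X : GMod k A 𝒜) (x : X.M) :
    ∑ j ∈ (DirectSum.decompose X.gr x).support, pr X j x = x :=
  DirectSum.sum_support_decompose X.gr x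

lemma pr_smul_homog (X : GMod k A 𝒜) {d : ℕ} {c : A} (hc : c ∈ 𝒜 d) (m : X.M) (j : ℕ) :
    pr X j (c • m) = if d ≤ j then c • pr X (j - d) m else 0 := by
  induction m using DirectSum.Decomposition.inductionOn X.gr with
  | zero => simp
  | homogeneous m =>
      rename_i e
      have h1 : c • (m : X.M) ∈ X.gr (d + e) :=
        SetLike.GradedSMul.smul_mem hc m.2
      by_cases hj : d + e = j
      · rw [pr_of_mem X (hj ▸ h1), if_pos (by omega)]
        have he : j - d = e := by omega
        rw [he, pr_of_mem X m.2]
      · rw [pr_of_mem_ne X h1 hj]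
        split
        · have : (e : ℕ) ≠ j - d := by omega
          rw [pr_of_mem_ne X m.2 this, smul_zero]
        · rfl
  | add x y hx hy =>
      rw [smul_add, map_add, hx, hy, map_add]
      split <;> simp [smul_add]

/-- Generators of `J` are in `J`. -/
lemma homog_mem_J {d : ℕ} {c : A} (hc : c ∈ 𝒜 d) (hd : 1 ≤ d) : c ∈ Jideal k A 𝒜 := by
  apply Submodule.subset_span
  exact Set.mem_iUnion.2 ⟨d - 1, by simpa [Nat.sub_add_cancel hd] using hc⟩

/-- Master lemma: components of elements of `J • ⊤` lie in `J • ⊤` and in the span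
of strictly lower graded pieces. -/
lemma pr_mem_target (X : GMod k A 𝒜) {z : X.M}
    (hz : z ∈ Jideal k A 𝒜 • (⊤ : Submodule A X.M)) (j : ℕ) :
    pr X j z ∈ (Jideal k A 𝒜 • (⊤ : Submodule A X.M)) ⊓
      Submodule.span A (⋃ e ∈ Set.Iio j, ((X.gr e : Submodule k X.M) : Set X.M)) := by
  set T : ℕ → Submodule A X.M := fun j => (Jideal k A 𝒜 • (⊤ : Submodule A X.M)) ⊓
      Submodule.span A (⋃ e ∈ Set.Iio j, ((X.gr e : Submodule k X.M) : Set X.M)) with hT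
  have Tmono : ∀ {j₁ j₂ : ℕ}, j₁ ≤ j₂ → T j₁ ≤ T j₂ := by
    intro j₁ j₂ h
    refine inf_le_inf le_rfl (Submodule.span_mono ?_)
    exact Set.iUnion₂_mono' fun e he => ⟨e, lt_of_lt_of_le he h, le_rfl⟩
  revert j
  refine Submodule.smul_induction_on hz ?_ ?_
  · intro a ha n hn
    induction ha using Submodule.span_induction generalizing n hn with
    | mem c hcU =>
        intro j
        obtain ⟨s', ⟨i, rfl⟩, hc⟩ := hcU
        rw [pr_smul_homog X hc]
        split
        · refine ⟨Submodule.smul_mem_smul (homog_mem_J hc (by omega)) trivial, ?_⟩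
          refine Submodule.smul_mem _ _ (Submodule.subset_span ?_)
          exact Set.mem_biUnion (by omega : j - (i+1) < j) (pr_mem X _ n)
        · exact (T j).zero_mem
    | zero => intro j; simp only [zero_smul, map_zero]; exact (T j).zero_mem
    | add a b ha hb iha ihb =>
        intro j
        rw [add_smul, map_add]
        exact (T j).add_mem (iha n hn j) (ihb n hn j)
    | smul b a ha iha =>
        intro j
        rw [smul_eq_mul, mul_smul]
        set z' := a • n with hz'
        classical
        have : b • z' = ∑ d ∈ (DirectSum.decompose 𝒜 b).support,
            ((DirectSum.decompose 𝒜 b d : A) • z') := by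
          conv_lhs => rw [← DirectSum.sum_support_decompose 𝒜 b]
          rw [Finset.sum_smul]
        rw [this, map_sum]
        refine Submodule.sum_mem _ ?_
        intro d _
        rw [pr_smul_homog X (DirectSum.decompose 𝒜 b d).2]
        split
        · exact Tmono (Nat.sub_le j d) ((T (j - d)).smul_mem _ (iha n hn (j - d)))
        · exact (T j).zero_mem
  · intro x y hx hy j
    rw [map_add]
    exact (T j).add_mem (hx j) (hy j)

/-- If `X` is generated in degree `s`, its components in degrees `≠ s` are in `J • ⊤`. -/
lemma gr_le_J (X : GMod k A 𝒜) (hX : X.gen s) {j : ℕ} (hj : j ≠ s) :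
    ∀ x ∈ X.gr j, x ∈ Jideal k A 𝒜 • (⊤ : Submodule A X.M) := by
  intro x hx
  have hx' : x ∈ Submodule.span A ((X.gr s : Submodule k X.M) : Set X.M) := hX ▸ trivial
  have key : ∀ j' ≠ s, pr X j' x ∈ Jideal k A 𝒜 • (⊤ : Submodule A X.M) := by
    clear hx
    induction hx' using Submodule.span_induction with
    | mem m hm => intro j' hj'; rw [pr_of_mem_ne X hm (Ne.symm hj')]; exact Submodule.zero_mem _
    | zero => intro j' _; rw [map_zero]; exact Submodule.zero_mem _
    | add a b _ _ iha ihb => intro j' hj'; rw [map_add]; exact Submodule.add_mem _ (iha j' hj') (ihb j' hj')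
    | smul b a ha iha =>
        intro j' hj'
        classical
        have : b • a = ∑ d ∈ (DirectSum.decompose 𝒜 b).support,
            ((DirectSum.decompose 𝒜 b d : A) • a) := by
          conv_lhs => rw [← DirectSum.sum_support_decompose 𝒜 b]
          rw [Finset.sum_smul]
        rw [this, map_sum]
        refine Submodule.sum_mem _ ?_
        intro d _
        rw [pr_smul_homog X (DirectSum.decompose 𝒜 b d).2]
        split
        · rcases Nat.eq_zero_or_pos d with rfl | hd
          · by_cases h : j' - 0 = s
            · omega
            · exact Submodule.smul_mem _ _ (iha _ (by omega))
          · exact Submodule.smul_mem_smul (homog_mem_J (DirectSum.decompose 𝒜 b d).2 hd) trivial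
        · exact Submodule.zero_mem _
  have := key j hj
  rwa [pr_of_mem X hx] at this

/-- If `X` is generated in degree `s`, components in degree `< s` vanish. -/
lemma gr_eq_bot (X : GMod k A 𝒜) (hX : X.gen s) {j : ℕ} (hj : j < s) :
    ∀ x ∈ X.gr j, x = 0 := by
  intro x hx
  have hx' : x ∈ Submodule.span A ((X.gr s : Submodule k X.M) : Set X.M) := hX ▸ trivial
  have key : ∀ j' < s, pr X j' x = 0 := by
    clear hx
    induction hx' using Submodule.span_induction with
    | mem m hm => intro j' hj'; exact pr_of_mem_ne X hm (by omega)
    | zero => intro j' _; rw [map_zero]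
    | add a b _ _ iha ihb => intro j' hj'; rw [map_add, iha j' hj', ihb j' hj', add_zero]
    | smul b a ha iha =>
        intro j' hj'
        classical
        have : b • a = ∑ d ∈ (DirectSum.decompose 𝒜 b).support,
            ((DirectSum.decompose 𝒜 b d : A) • a) := by
          conv_lhs => rw [← DirectSum.sum_support_decompose 𝒜 b]
          rw [Finset.sum_smul]
        rw [this, map_sum]
        refine Finset.sum_eq_zero ?_
        intro d _
        rw [pr_smul_homog X (DirectSum.decompose 𝒜 b d).2]
        split
        · rw [iha _ (by omega), smul_zero]
        · rfl
  have := key j hj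
  rwa [pr_of_mem X hx] at this


end GenK

/-- A morphism of graded modules (degree-preserving `A`-linear map). -/
def GenK.IsGradedMap {k A : Type} [Field k] [Ring A] [Algebra k A]
    {𝒜 : ℕ → Submodule k A} [GradedAlgebra 𝒜] {L M : GenK.GMod k A 𝒜}
    (f : L.M →ₗ[A] M.M) : Prop :=
  ∀ i, ∀ x ∈ L.gr i, f x ∈ M.gr i

open GenK in
lemma pr_map {k A : Type} [Field k] [Ring A] [Algebra k A]
    {𝒜 : ℕ → Submodule k A} [GradedAlgebra 𝒜] {L M : GMod k A 𝒜}
    (f : L.M →ₗ[A] M.M) (hf : IsGradedMap f) (y : L.M) (j : ℕ) :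
    pr M j (f y) = f (pr L j y) := by
  induction y using DirectSum.Decomposition.inductionOn L.gr with
  | zero => simp
  | homogeneous m =>
      rename_i e
      by_cases hj : e = j
      · subst hj
        rw [pr_of_mem M (hf e m m.2), pr_of_mem L m.2]
      · rw [pr_of_mem_ne M (hf e m m.2) hj, pr_of_mem_ne L m.2 hj, map_zero]
  | add x y hx hy => rw [map_add, map_add, map_add, hx, hy, map_add]

open GenK in
/-- in a short exact sequence `0 → L → M → N → 0` of graded `A`-modules
with `M` generated in degree `s`, the module `L` is generated in degree `s`
if and only if `JM ∩ L = JL` (`L` being identified with its image in `M`). -/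
theorem stmt3 (k A : Type) [Field k] [Ring A] [Algebra k A] (𝒜 : ℕ → Submodule k A)
    [GradedAlgebra 𝒜]
    (hloc : ∀ i, FiniteDimensional k (𝒜 i))
    (hgen01 : ∀ i j, 𝒜 i * 𝒜 j = 𝒜 (i + j))
    (L M N : GMod k A 𝒜) (f : L.M →ₗ[A] M.M) (g : M.M →ₗ[A] N.M)
    (hf : IsGradedMap f) (hg : IsGradedMap g)
    (hinj : Function.Injective f) (hsurj : Function.Surjective g)
    (hexact : LinearMap.range f = LinearMap.ker g)
    (s : ℕ) (hM : M.gen s) :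
    L.gen s ↔
      (Jideal k A 𝒜 • (⊤ : Submodule A M.M)) ⊓ LinearMap.range f
        = Submodule.map f (Jideal k A 𝒜 • (⊤ : Submodule A L.M)) := by
  constructor
  · intro hL
    refine le_antisymm ?_ ?_
    · intro x hx
      obtain ⟨hxJ, y, rfl⟩ := hx
      refine Submodule.mem_map_of_mem (?_ : y ∈ _)
      rw [← sum_pr L y]
      refine Submodule.sum_mem _ fun j _ => ?_
      rcases lt_trichotomy j s with hj | rfl | hj
      · have h0 : f (pr L j y) = 0 :=
          gr_eq_bot M hM hj _ (hf j _ (pr_mem L j y))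
        have : pr L j y = 0 := hinj (by rw [h0, map_zero])
        rw [this]; exact Submodule.zero_mem _
      · have h1 : pr M j (f y) ∈ Submodule.span A
            (⋃ e ∈ Set.Iio j, ((M.gr e : Submodule k M.M) : Set M.M)) :=
          (pr_mem_target M hxJ j).2
        have h2 : Submodule.span A
            (⋃ e ∈ Set.Iio j, ((M.gr e : Submodule k M.M) : Set M.M)) = ⊥ := by
          rw [Submodule.span_eq_bot]
          rintro x hx
          simp only [Set.mem_iUnion] at hx
          obtain ⟨e, he, hxe⟩ := hx
          exact gr_eq_bot M hM he x hxe
        rw [h2, Submodule.mem_bot, pr_map f hf] at h1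
        have : pr L j y = 0 := hinj (by rw [h1, map_zero])
        rw [this]; exact Submodule.zero_mem _
      · exact gr_le_J L hL (by omega) _ (pr_mem L j y)
    · rw [Submodule.map_smul'', Submodule.map_top]
      exact le_inf (Submodule.smul_mono le_rfl le_top) Submodule.smul_le_right
  · intro hE
    have key : ∀ j, ∀ x ∈ L.gr j,
        x ∈ Submodule.span A ((L.gr s : Submodule k L.M) : Set L.M) := by
      intro j
      induction j using Nat.strong_induction_on with
      | _ j IH =>
        intro x hx
        rcases lt_trichotomy j s with hj | rfl | hj
        · have h0 : f x = 0 := gr_eq_bot M hM hj _ (hf j x hx)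
          have : x = 0 := hinj (by rw [h0, map_zero])
          rw [this]; exact Submodule.zero_mem _
        · exact Submodule.subset_span hx
        · have h1 : f x ∈ (Jideal k A 𝒜 • (⊤ : Submodule A M.M)) ⊓ LinearMap.range f :=
            ⟨gr_le_J M hM (by omega) _ (hf j x hx), ⟨x, rfl⟩⟩
          rw [hE] at h1
          obtain ⟨y, hy, hyx⟩ := h1
          have hxy : x = y := hinj hyx.symm ▸ rfl
          have hxJ : x ∈ Jideal k A 𝒜 • (⊤ : Submodule A L.M) := by
            rw [show x = y from (hinj hyx).symm]; exact hy
          have h2 := (pr_mem_target L hxJ j).2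
          rw [pr_of_mem L hx] at h2
          refine Submodule.span_le.2 ?_ h2
          rintro z hz
          simp only [Set.mem_iUnion] at hz
          obtain ⟨e, he, hze⟩ := hz
          exact IH e he z hze
    rw [GMod.gen, eq_top_iff]
    intro x _
    rw [← sum_pr L x]
    exact Submodule.sum_mem _ fun j _ => key j _ (pr_mem L j x)
end

section
/- Suppose each graded A-module in the short exact sequence 0 → L → M → N → 0 is generated in degree 0. Then J^i M ∩ L = J^i L for all i ≥ 0, where J = ⊕_{i≥1} A_i. -/
open DirectSum CategoryTheory

section Stmt4Aux

open DirectSum GenK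

variable {k A : Type} [Field k] [Ring A] [Algebra k A] {𝒜 : ℕ → Submodule k A}
  [GradedAlgebra 𝒜]

set_option linter.unusedSectionVars false

/-- positive-degree homogeneous elements lie in `J`. -/
theorem GenK.mem_J {e : ℕ} {x : A} (hx : x ∈ 𝒜 (e + 1)) : x ∈ Jideal k A 𝒜 :=
  Submodule.subset_span (Set.mem_iUnion.2 ⟨e, hx⟩)

/-- `𝒜 d ⊆ J ^ d`, using generation in degrees 0 and 1. -/
theorem GenK.grA_le_Jpow (hgen01 : ∀ i j, 𝒜 i * 𝒜 j = 𝒜 (i + j)) :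
    ∀ d, ∀ x ∈ 𝒜 d, x ∈ (Jideal k A 𝒜) ^ d := by
  intro d
  induction d with
  | zero =>
    intro x _
    rw [Submodule.pow_zero, Ideal.one_eq_top]
    trivial
  | succ d ih =>
    intro x hx
    rw [← hgen01 d 1] at hx
    rw [Submodule.pow_succ]
    exact Submodule.mul_induction_on hx
      (fun b hb c hc => Ideal.mul_mem_mul (ih b hb) (GenK.mem_J (e := 0) hc))
      (fun y z hy hz => add_mem hy hz)

/-- The `k`-submodule of elements supported in degrees `≥ i`. -/
noncomputable def GenK.Fk (X : GMod k A 𝒜) (i : ℕ) : Submodule k X.M :=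
  ⨆ d, X.gr (d + i)

theorem GenK.gr_le_Fk {X : GMod k A 𝒜} {i d : ℕ} (h : i ≤ d) {x : X.M}
    (hx : x ∈ X.gr d) : x ∈ Fk X i := by
  have hx' : x ∈ X.gr ((d - i) + i) := by rwa [Nat.sub_add_cancel h]
  exact Submodule.mem_iSup_of_mem (d - i) hx'

theorem GenK.Fk_mono {X : GMod k A 𝒜} {i j : ℕ} (h : i ≤ j) : Fk X j ≤ Fk X i :=
  iSup_le fun d x hx => gr_le_Fk (le_trans h (Nat.le_add_left j d)) hx

theorem GenK.smul_hom_Fk {X : GMod k A 𝒜} {e : ℕ} {a : A} (ha : a ∈ 𝒜 e) {j : ℕ}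
    {y : X.M} (hy : y ∈ Fk X j) : a • y ∈ Fk X (e + j) := by
  refine Submodule.iSup_induction (motive := fun y => a • y ∈ Fk X (e + j)) _ hy
    (fun d x hx => ?_) ?_ (fun x y hx hy => ?_)
  · show a • x ∈ Fk X (e + j)
    have h1 : a • x ∈ X.gr (e + (d + j)) := SetLike.GradedSMul.smul_mem ha hx
    exact gr_le_Fk (by omega) h1
  · show a • (0 : X.M) ∈ Fk X (e + j)
    rw [smul_zero]; exact zero_mem _
  · show a • (x + y) ∈ Fk X (e + j)
    rw [smul_add]; exact add_mem hx hy

theorem GenK.smul_Fk {X : GMod k A 𝒜} (a : A) {j : ℕ} {y : X.M}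
    (hy : y ∈ Fk X j) : a • y ∈ Fk X j := by
  classical
  rw [← DirectSum.sum_support_decompose 𝒜 a, Finset.sum_smul]
  refine Submodule.sum_mem _ fun e _ => ?_
  exact Fk_mono (Nat.le_add_left j e) (smul_hom_Fk (SetLike.coe_mem _) hy)

theorem GenK.J_smul_Fk {X : GMod k A 𝒜} {v : A} (hv : v ∈ Jideal k A 𝒜) {j : ℕ}
    {y : X.M} (hy : y ∈ Fk X j) : v • y ∈ Fk X (j + 1) := by
  refine Submodule.span_induction (p := fun v _ => v • y ∈ Fk X (j + 1))
    (fun x hx => ?_) ?_ (fun u w _ _ hu hw => ?_) (fun a u _ hu => ?_) hv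
  · show x • y ∈ Fk X (j + 1)
    obtain ⟨e, hxe⟩ := Set.mem_iUnion.1 hx
    exact Fk_mono (by omega) (smul_hom_Fk hxe hy)
  · show (0 : A) • y ∈ Fk X (j + 1)
    rw [zero_smul]; exact zero_mem _
  · show (u + w) • y ∈ Fk X (j + 1)
    rw [add_smul]; exact add_mem hu hw
  · show (a • u) • y ∈ Fk X (j + 1)
    rw [smul_eq_mul, mul_smul]
    exact smul_Fk a hu

theorem GenK.Jpow_smul_Fk {X : GMod k A 𝒜} (i : ℕ) :
    ∀ v ∈ (Jideal k A 𝒜) ^ i, ∀ j (y : X.M), y ∈ Fk X j → v • y ∈ Fk X (i + j) := by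
  induction i with
  | zero =>
    intro v _ j y hy
    rw [Nat.zero_add]
    exact smul_Fk v hy
  | succ i ih =>
    intro v hv j y hy
    rw [Submodule.pow_succ] at hv
    refine Submodule.mul_induction_on
      (C := fun v => ∀ j (y : X.M), y ∈ Fk X j → v • y ∈ Fk X (i + 1 + j)) hv
      (fun u hu w hw j y hy => ?_)
      (fun u w hu hw j y hy => by rw [add_smul]; exact add_mem (hu j y hy) (hw j y hy))
      j y hy
    rw [mul_smul]
    have h1 : w • y ∈ Fk X (j + 1) := J_smul_Fk hw hy
    have h2 := ih u hu (j + 1) (w • y) h1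
    have h3 : i + (j + 1) = i + 1 + j := by omega
    rwa [h3] at h2

theorem GenK.mem_Fk_zero {X : GMod k A 𝒜} (y : X.M) : y ∈ Fk X 0 := by
  classical
  rw [← DirectSum.sum_support_decompose X.gr y]
  exact Submodule.sum_mem _ fun d _ => gr_le_Fk (Nat.zero_le d) (SetLike.coe_mem _)

theorem GenK.Jpow_top_le_Fk {X : GMod k A 𝒜} (i : ℕ) {x : X.M}
    (hx : x ∈ ((Jideal k A 𝒜) ^ i • (⊤ : Submodule A X.M))) : x ∈ Fk X i := by
  refine Submodule.smul_induction_on hx (fun r hr n _ => ?_)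
    (fun u w hu hw => add_mem hu hw)
  have h := Jpow_smul_Fk i r hr 0 n (mem_Fk_zero n)
  rwa [Nat.add_zero] at h

/-- projection of a finite sum of homogeneous elements. -/
theorem GenK.proj_sum {X : GMod k A 𝒜} (s : Finset ℕ) (y : ℕ → X.M)
    (hy : ∀ e ∈ s, y e ∈ X.gr e) (d : ℕ) :
    (DirectSum.decompose X.gr (∑ e ∈ s, y e) d : X.M) = if d ∈ s then y d else 0 := by
  classical
  induction s using Finset.induction_on with
  | empty => simp
  | @insert a t hat ih =>
    rw [Finset.sum_insert hat, DirectSum.decompose_add, DirectSum.add_apply,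
      Submodule.coe_add, ih (fun e he => hy e (Finset.mem_insert_of_mem he))]
    by_cases had : a = d
    · subst had
      rw [DirectSum.decompose_of_mem_same X.gr (hy a (Finset.mem_insert_self a t))]
      simp [hat]
    · rw [DirectSum.decompose_of_mem_ne X.gr (hy a (Finset.mem_insert_self a t)) had,
        zero_add]
      simp [Finset.mem_insert, (Ne.symm had : d ≠ a)]

theorem GenK.Fk_proj_eq_zero {X : GMod k A 𝒜} {i : ℕ} {x : X.M} (hx : x ∈ Fk X i) :
    ∀ d < i, (DirectSum.decompose X.gr x d : X.M) = 0 := by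
  classical
  refine Submodule.iSup_induction
    (motive := fun x => ∀ d < i, (DirectSum.decompose X.gr x d : X.M) = 0) _ hx
    (fun e y hy => ?_) ?_ (fun y z hy hz => ?_)
  · show ∀ d < i, (DirectSum.decompose X.gr y d : X.M) = 0
    intro d hd
    exact DirectSum.decompose_of_mem_ne X.gr hy (by omega)
  · show ∀ d < i, (DirectSum.decompose X.gr (0 : X.M) d : X.M) = 0
    intro d _; simp
  · show ∀ d < i, (DirectSum.decompose X.gr (y + z) d : X.M) = 0
    intro d hd
    rw [DirectSum.decompose_add, DirectSum.add_apply, Submodule.coe_add, hy d hd,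
      hz d hd, add_zero]

/-- decomposition commutes with graded maps. -/
theorem GenK.decompose_map {L M : GMod k A 𝒜} (f : L.M →ₗ[A] M.M)
    (hf : IsGradedMap f) (x : L.M) (d : ℕ) :
    (DirectSum.decompose M.gr (f x) d : M.M)
      = f (DirectSum.decompose L.gr x d : L.M) := by
  classical
  have hrep : x = ∑ e ∈ DFinsupp.support (DirectSum.decompose L.gr x),
      (DirectSum.decompose L.gr x e : L.M) :=
    (DirectSum.sum_support_decompose L.gr x).symm
  conv_lhs => rw [hrep]
  rw [map_sum, proj_sum _ _ (fun e _ => hf e _ (SetLike.coe_mem _)) d]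
  by_cases hds : d ∈ DFinsupp.support (DirectSum.decompose L.gr x)
  · simp [hds]
  · have h0 : (DirectSum.decompose L.gr x d : L.M) = 0 := by
      have := DFinsupp.notMem_support_iff.1 hds
      rw [this]; rfl
    simp [hds, h0]

/-- degree `d` part generated by `𝒜 d • (gr 0)`. -/
noncomputable def GenK.Tsub (X : GMod k A 𝒜) (d : ℕ) : Submodule k X.M :=
  Submodule.span k {y | ∃ a ∈ 𝒜 d, ∃ m ∈ X.gr 0, y = a • m}

theorem GenK.Tsub_le_gr {X : GMod k A 𝒜} (d : ℕ) : Tsub X d ≤ X.gr d := by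
  refine Submodule.span_le.2 ?_
  rintro y ⟨a, ha, m, hm, rfl⟩
  have h := SetLike.GradedSMul.smul_mem (A := 𝒜) (B := X.gr) ha hm
  simpa using h

theorem GenK.smul_Tsub {X : GMod k A 𝒜} {e : ℕ} {a : A} (ha : a ∈ 𝒜 e) {d : ℕ}
    {y : X.M} (hy : y ∈ Tsub X d) : a • y ∈ Tsub X (e + d) := by
  refine Submodule.span_induction (p := fun y _ => a • y ∈ Tsub X (e + d))
    (fun y hy => ?_) ?_ (fun u w _ _ hu hw => ?_) (fun c u _ hu => ?_) hy
  · show a • y ∈ Tsub X (e + d)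
    obtain ⟨b, hb, m, hm, rfl⟩ := hy
    rw [← mul_smul]
    exact Submodule.subset_span ⟨a * b, SetLike.mul_mem_graded ha hb, m, hm, rfl⟩
  · show a • (0 : X.M) ∈ Tsub X (e + d)
    rw [smul_zero]; exact zero_mem _
  · show a • (u + w) ∈ Tsub X (e + d)
    rw [smul_add]; exact add_mem hu hw
  · show a • (c • u) ∈ Tsub X (e + d)
    rw [smul_comm]
    exact Submodule.smul_mem _ c hu

theorem GenK.gr_le_Tsub {X : GMod k A 𝒜} (hX : X.gen 0) (d : ℕ) {x : X.M}
    (hx : x ∈ X.gr d) : x ∈ Tsub X d := by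
  classical
  have hsup : x ∈ ⨆ d', Tsub X d' := by
    have hx' : x ∈ Submodule.span A ((X.gr 0 : Submodule k X.M) : Set X.M) := by
      rw [hX]; trivial
    refine Submodule.span_induction (p := fun x _ => x ∈ ⨆ d', Tsub X d')
      (fun y hy => ?_) ?_ (fun u w _ _ hu hw => ?_) (fun a u _ hu => ?_) hx'
    · show y ∈ ⨆ d', Tsub X d'
      refine Submodule.mem_iSup_of_mem 0 ?_
      exact Submodule.subset_span ⟨1, SetLike.one_mem_graded 𝒜, y, hy, (one_smul A y).symm⟩
    · show (0 : X.M) ∈ ⨆ d', Tsub X d'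
      exact zero_mem _
    · show u + w ∈ ⨆ d', Tsub X d'
      exact add_mem hu hw
    · show a • u ∈ ⨆ d', Tsub X d'
      rw [← DirectSum.sum_support_decompose 𝒜 a, Finset.sum_smul]
      refine Submodule.sum_mem _ fun e _ => ?_
      refine Submodule.iSup_induction
        (motive := fun u => ((DirectSum.decompose 𝒜 a e : A) • u) ∈ ⨆ d', Tsub X d') _ hu
        (fun d' z hz => ?_) ?_ (fun y z hy hz => ?_)
      · show (DirectSum.decompose 𝒜 a e : A) • z ∈ ⨆ d', Tsub X d'
        exact Submodule.mem_iSup_of_mem (e + d') (smul_Tsub (SetLike.coe_mem _) hz)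
      · show (DirectSum.decompose 𝒜 a e : A) • (0 : X.M) ∈ ⨆ d', Tsub X d'
        rw [smul_zero]; exact zero_mem _
      · show (DirectSum.decompose 𝒜 a e : A) • (y + z) ∈ ⨆ d', Tsub X d'
        rw [smul_add]; exact add_mem hy hz
  have hproj : ∀ y ∈ ⨆ d', Tsub X d',
      (DirectSum.decompose X.gr y d : X.M) ∈ Tsub X d := by
    intro y hy
    refine Submodule.iSup_induction
      (motive := fun y => (DirectSum.decompose X.gr y d : X.M) ∈ Tsub X d) _ hy
      (fun d' z hz => ?_) ?_ (fun y z hy hz => ?_)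
    · show (DirectSum.decompose X.gr z d : X.M) ∈ Tsub X d
      by_cases hdd : d' = d
      · subst hdd
        rw [DirectSum.decompose_of_mem_same X.gr (Tsub_le_gr d' hz)]
        exact hz
      · rw [DirectSum.decompose_of_mem_ne X.gr (Tsub_le_gr d' hz) hdd]
        exact zero_mem _
    · show (DirectSum.decompose X.gr (0 : X.M) d : X.M) ∈ Tsub X d
      simp
    · show (DirectSum.decompose X.gr (y + z) d : X.M) ∈ Tsub X d
      rw [DirectSum.decompose_add, DirectSum.add_apply, Submodule.coe_add]
      exact add_mem hy hz
  have h := hproj x hsup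
  rwa [DirectSum.decompose_of_mem_same X.gr hx] at h

theorem GenK.gr_le_Jpow_smul {X : GMod k A 𝒜} (hX : X.gen 0)
    (hgen01 : ∀ i j, 𝒜 i * 𝒜 j = 𝒜 (i + j)) (d : ℕ) {x : X.M} (hx : x ∈ X.gr d) :
    x ∈ ((Jideal k A 𝒜) ^ d • (⊤ : Submodule A X.M)) := by
  have hT := gr_le_Tsub hX d hx
  refine Submodule.span_induction
    (p := fun y _ => y ∈ ((Jideal k A 𝒜) ^ d • (⊤ : Submodule A X.M)))
    (fun y hy => ?_) ?_ (fun u w _ _ hu hw => ?_) (fun c u _ hu => ?_) hT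
  · show y ∈ (Jideal k A 𝒜) ^ d • (⊤ : Submodule A X.M)
    obtain ⟨a, ha, m, hm, rfl⟩ := hy
    exact Submodule.smul_mem_smul (grA_le_Jpow hgen01 d a ha) Submodule.mem_top
  · show (0 : X.M) ∈ (Jideal k A 𝒜) ^ d • (⊤ : Submodule A X.M)
    exact zero_mem _
  · show u + w ∈ (Jideal k A 𝒜) ^ d • (⊤ : Submodule A X.M)
    exact add_mem hu hw
  · show c • u ∈ (Jideal k A 𝒜) ^ d • (⊤ : Submodule A X.M)
    rw [← algebraMap_smul A c u]
    exact Submodule.smul_mem _ _ hu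

theorem GenK.Jpow_smul_top_mono {X : GMod k A 𝒜} {i d : ℕ} (h : i ≤ d) :
    ((Jideal k A 𝒜) ^ d • (⊤ : Submodule A X.M)) ≤ (Jideal k A 𝒜) ^ i • ⊤ := by
  obtain ⟨c, rfl⟩ := Nat.exists_eq_add_of_le h
  clear h
  induction c with
  | zero => exact le_of_eq rfl
  | succ c ih =>
    intro x hx
    refine Submodule.smul_induction_on hx (fun r hr n _ => ?_)
      (fun u w hu hw => add_mem hu hw)
    have hr' : r ∈ (Jideal k A 𝒜) ^ (i + c) * Jideal k A 𝒜 := hr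
    refine Submodule.mul_induction_on hr' (fun u hu w hw => ?_)
      (fun u w hu hw => by rw [add_smul]; exact add_mem hu hw)
    rw [mul_smul]
    exact ih (Submodule.smul_mem_smul hu Submodule.mem_top)

end Stmt4Aux

open GenK in
/-- if all three graded modules in a short exact sequence
`0 → L → M → N → 0` are generated in degree `0`, then `J^i M ∩ L = J^i L`
for all `i ≥ 0` (identifying `L` with its image in `M`). -/
theorem stmt4 (k A : Type) [Field k] [Ring A] [Algebra k A] (𝒜 : ℕ → Submodule k A)
    [GradedAlgebra 𝒜]
    (hloc : ∀ i, FiniteDimensional k (𝒜 i))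
    (hgen01 : ∀ i j, 𝒜 i * 𝒜 j = 𝒜 (i + j))
    (L M N : GMod k A 𝒜) (f : L.M →ₗ[A] M.M) (g : M.M →ₗ[A] N.M)
    (hf : IsGradedMap f) (hg : IsGradedMap g)
    (hinj : Function.Injective f) (hsurj : Function.Surjective g)
    (hexact : LinearMap.range f = LinearMap.ker g)
    (hL : L.gen 0) (hM : M.gen 0) (hN : N.gen 0) :
    ∀ i : ℕ,
      ((Jideal k A 𝒜) ^ i • (⊤ : Submodule A M.M)) ⊓ LinearMap.range f
        = Submodule.map f ((Jideal k A 𝒜) ^ i • (⊤ : Submodule A L.M)) := by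

  classical
  intro i
  apply le_antisymm
  · rintro x ⟨hxJ, l, rfl⟩
    have hFk : f l ∈ Fk M i := Jpow_top_le_Fk i hxJ
    have hlow : ∀ d < i, (DirectSum.decompose L.gr l d : L.M) = 0 := by
      intro d hd
      apply hinj
      rw [← decompose_map f hf l d, map_zero]
      exact Fk_proj_eq_zero hFk d hd
    have hlmem : l ∈ ((Jideal k A 𝒜) ^ i • (⊤ : Submodule A L.M)) := by
      rw [← DirectSum.sum_support_decompose L.gr l]
      refine Submodule.sum_mem _ fun d hd => ?_
      have hne : (DirectSum.decompose L.gr l d : L.M) ≠ 0 := by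
        intro h0
        rw [DFinsupp.mem_support_iff] at hd
        exact hd (Subtype.ext h0)
      have hid : i ≤ d := by
        by_contra hlt
        exact hne (hlow d (by omega))
      exact Jpow_smul_top_mono hid
        (gr_le_Jpow_smul hL hgen01 d (SetLike.coe_mem _))
    exact Submodule.mem_map_of_mem hlmem
  · intro x hx
    obtain ⟨l, hl, rfl⟩ := hx
    refine ⟨?_, l, rfl⟩
    refine Submodule.smul_induction_on hl (fun r hr n _ => ?_)
      (fun u w hu hw => by rw [map_add]; exact add_mem hu hw)
    rw [map_smul]
    exact Submodule.smul_mem_smul hr Submodule.mem_top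
end

section
/- If A is a Koszul algebra (i.e., A_0 is a Koszul A-module), then A is quadratic: the kernel of the natural surjection from the tensor algebra T_{A_0}(A_1) onto A is generated as a two-sided ideal by its degree-2 component contained in A_1 ⊗_{A_0} A_1. -/
set_option synthInstance.maxHeartbeats 1000000
set_option maxHeartbeats 3200000
set_option linter.unusedVariables false


open DirectSum CategoryTheory

/-- `A₀ = 𝒜 0` is a self-injective algebra: every projective `A₀`-module is injective. -/
def GenK.SelfInjectiveDegZero (k A : Type) [Field k] [Ring A] [Algebra k A]
    (𝒜 : ℕ → Submodule k A) [GradedAlgebra 𝒜] : Prop :=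
  ∀ (V : Type) [AddCommGroup V] [Module (𝒜 0) V],
    Module.Projective (𝒜 0) V → Module.Injective (𝒜 0) V

/-- `Z` is (a copy of) the graded `A`-module `A₀ = A/J`, concentrated in degree `0`. -/
def GenK.IsDegZeroPart {k A : Type} [Field k] [Ring A] [Algebra k A]
    {𝒜 : ℕ → Submodule k A} [GradedAlgebra 𝒜] (Z : GenK.GMod k A 𝒜) : Prop :=
  ∃ q : A →ₗ[A] Z.M, Function.Surjective q ∧ LinearMap.ker q = GenK.Jideal k A 𝒜 ∧
    ∀ j, j ≠ 0 → Z.gr j = ⊥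



namespace Stmt15Aux

section Generic
variable {k : Type} [Field k]
variable {M : Type} [AddCommGroup M] [Module k M] (gM : ℕ → Submodule k M)
  [DirectSum.Decomposition gM]

/-- The `n`-th graded component of `m`, as a `k`-linear endomorphism. -/
noncomputable def cmp (n : ℕ) : M →ₗ[k] M where
  toFun m := (DirectSum.decompose gM m n : M)
  map_add' x y := by
    show (DirectSum.decompose gM (x + y) n : M) = _
    rw [DirectSum.decompose_add]; simp
  map_smul' c x := by
    show (DirectSum.decompose gM (c • x) n : M) = _
    rw [DirectSum.decompose_smul]
    rw [DirectSum.smul_apply]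
    simp

lemma cmp_apply (n : ℕ) (m : M) : cmp gM n m = (DirectSum.decompose gM m n : M) := rfl

lemma cmp_mem (n : ℕ) (m : M) : cmp gM n m ∈ gM n := (DirectSum.decompose gM m n).2

lemma cmp_same {n : ℕ} {m : M} (h : m ∈ gM n) : cmp gM n m = m :=
  DirectSum.decompose_of_mem_same gM h

lemma cmp_ne {i n : ℕ} {m : M} (h : m ∈ gM i) (hne : i ≠ n) : cmp gM n m = 0 := by
  have := DirectSum.decompose_of_mem_ne gM h hne
  simpa [cmp_apply] using this

lemma cmp_sum (m : M) : ∃ s : Finset ℕ, m = ∑ n ∈ s, cmp gM n m := by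
  classical
  exact ⟨(DirectSum.decompose gM m).support,
    (DirectSum.sum_support_decompose gM m).symm⟩

lemma cmp_map_shift {W : Type} [AddCommGroup W] [Module k W] (gW : ℕ → Submodule k W)
    [DirectSum.Decomposition gW] (f : M →ₗ[k] W) (s : ℕ)
    (hf : ∀ j, ∀ x ∈ gM j, f x ∈ gW (j + s)) (m : M) (n : ℕ) :
    cmp gW n (f m) = if s ≤ n then f (cmp gM (n - s) m) else 0 := by
  induction m using DirectSum.Decomposition.inductionOn gM with
  | zero =>
      rw [map_zero, map_zero]
      simp only [cmp_apply, DirectSum.decompose_zero, DirectSum.zero_apply,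
        ZeroMemClass.coe_zero, map_zero]
      split <;> simp
  | @homogeneous i x =>
      have hx : (x : M) ∈ gM i := x.2
      have hfx : f x ∈ gW (i + s) := hf i _ hx
      by_cases hn : n = i + s
      · subst hn
        rw [cmp_same gW hfx, if_pos (Nat.le_add_left s i), Nat.add_sub_cancel,
          cmp_same gM hx]
      · rw [cmp_ne gW hfx (fun h => hn h.symm)]
        split
        · rename_i h
          have : i ≠ n - s := by omega
          rw [cmp_ne gM hx this, map_zero]
        · rfl
  | add m m' hm hm' =>
      rw [map_add, map_add, hm, hm']
      split
      · rw [map_add]; simp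
      · simp

lemma cmp_map {W : Type} [AddCommGroup W] [Module k W] (gW : ℕ → Submodule k W)
    [DirectSum.Decomposition gW] (f : M →ₗ[k] W)
    (hf : ∀ j, ∀ x ∈ gM j, f x ∈ gW j) (m : M) (n : ℕ) :
    cmp gW n (f m) = f (cmp gM n m) := by
  have := cmp_map_shift gM gW f 0 (by simpa using hf) m n
  simpa using this

/-- If `m` lies in a graded piece, it equals its own component there; if moreover every
nonzero-degree component vanishes we recover concentration results. -/
lemma cmp_eq_self_of_conc (h0 : ∀ j, j ≠ 0 → gM j = ⊥) (m : M) : cmp gM 0 m = m := by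
  obtain ⟨s, hs⟩ := cmp_sum gM m
  classical
  have : ∀ j ∈ s, cmp gM j m = if j = 0 then cmp gM 0 m else 0 := by
    intro j _
    by_cases hj : j = 0
    · simp [hj]
    · have : cmp gM j m ∈ gM j := cmp_mem gM j m
      rw [h0 j hj] at this
      simp [hj, (Submodule.mem_bot k).mp this]
  rw [Finset.sum_congr rfl this] at hs
  rw [Finset.sum_ite_eq' s 0 (fun _ => cmp gM 0 m)] at hs
  by_cases h0s : 0 ∈ s
  · rw [if_pos h0s] at hs; exact hs.symm
  · rw [if_neg h0s] at hs; subst hs; rw [map_zero]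

end Generic

section GradedRing
variable {k : Type} [Field k]
variable {R : Type} [Ring R] [Algebra k R] {ℛ : ℕ → Submodule k R} [GradedAlgebra ℛ]

lemma cmp_mul {d : ℕ} {b : R} (hb : b ∈ ℛ d) (x : R) (n : ℕ) :
    cmp ℛ n (b * x) = if d ≤ n then b * cmp ℛ (n - d) x else 0 := by
  have := cmp_map_shift ℛ ℛ (LinearMap.mulLeft k b) d
    (fun j y hy => by simpa [add_comm] using SetLike.mul_mem_graded hb hy) x n
  simpa using this

lemma cmp_mul_right {d : ℕ} {v : R} (hv : v ∈ ℛ d) (x : R) (n : ℕ) :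
    cmp ℛ n (x * v) = if d ≤ n then cmp ℛ (n - d) x * v else 0 := by
  have := cmp_map_shift ℛ ℛ (LinearMap.mulRight k v) d
    (fun j y hy => SetLike.mul_mem_graded hy hv) x n
  simpa using this

lemma cmp0_mul {x : R} (hx : cmp ℛ 0 x = 0) (b : R) : cmp ℛ 0 (b * x) = 0 := by
  obtain ⟨s, hs⟩ := cmp_sum ℛ b
  have hbx : b * x = ∑ n ∈ s, cmp ℛ n b * x := by rw [← Finset.sum_mul, ← hs]
  rw [hbx, map_sum]
  apply Finset.sum_eq_zero
  intro i _
  rw [cmp_mul (cmp_mem ℛ i b)]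
  split
  · rename_i hle
    have : i = 0 := by omega
    subst this
    simp [hx]
  · rfl

end GradedRing

section Jideal
variable {k A : Type} [Field k] [Ring A] [Algebra k A] {𝒜 : ℕ → Submodule k A}
  [GradedAlgebra 𝒜]

lemma mem_J_iff {a : A} : a ∈ GenK.Jideal k A 𝒜 ↔ cmp 𝒜 0 a = 0 := by
  constructor
  · intro ha
    induction ha using Submodule.span_induction with
    | mem x hx =>
        obtain ⟨i, hxi⟩ := Set.mem_iUnion.mp hx
        exact cmp_ne 𝒜 hxi (by omega)
    | zero => rw [map_zero]
    | add x y _ _ hx hy => rw [map_add, hx, hy, add_zero]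
    | smul b x _ hx => rw [smul_eq_mul]; exact cmp0_mul hx b
  · intro h
    obtain ⟨s, hs⟩ := cmp_sum 𝒜 a
    rw [hs]
    apply Submodule.sum_mem
    intro n _
    match n with
    | 0 => rw [h]; exact Submodule.zero_mem _
    | m+1 =>
        apply Submodule.subset_span
        exact Set.mem_iUnion.mpr ⟨m, cmp_mem 𝒜 (m+1) a⟩

lemma idem_J {x : A} (hx : x ∈ GenK.Jideal k A 𝒜) (hxx : x * x = x) : x = 0 := by
  by_contra hne
  have h0 : cmp 𝒜 0 x = 0 := mem_J_iff.mp hx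
  have hex : ∃ n, cmp 𝒜 n x ≠ 0 := by
    by_contra hall
    push_neg at hall
    obtain ⟨s, hs⟩ := cmp_sum 𝒜 x
    exact hne (by rw [hs]; exact Finset.sum_eq_zero fun n _ => hall n)
  classical
  have hd : cmp 𝒜 (Nat.find hex) x ≠ 0 := Nat.find_spec hex
  have hdmin : ∀ i < Nat.find hex, cmp 𝒜 i x = 0 := fun i hi =>
    not_not.mp (Nat.find_min hex hi)
  obtain ⟨s, hs⟩ := cmp_sum 𝒜 x
  apply hd
  have hxx2 : x * x = ∑ n ∈ s, cmp 𝒜 n x * x := by rw [← Finset.sum_mul, ← hs]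
  have e1 : cmp 𝒜 (Nat.find hex) x = cmp 𝒜 (Nat.find hex) (x * x) := by rw [hxx]
  rw [e1, hxx2, map_sum]
  apply Finset.sum_eq_zero
  intro i _
  rw [cmp_mul (cmp_mem 𝒜 i x)]
  split
  · rename_i hle
    rcases Nat.lt_or_ge i (Nat.find hex) with hlt | hge
    · rw [hdmin i hlt, zero_mul]
    · have : i = Nat.find hex := le_antisymm hle hge
      subst this
      rw [Nat.sub_self, h0, mul_zero]
  · rfl

end Jideal

section GModLemmas
open GenK
variable {k A : Type} [Field k] [Ring A] [Algebra k A] {𝒜 : ℕ → Submodule k A}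
  [GradedAlgebra 𝒜]

/-- Scalar multiplication by a ring element as a `k`-linear endomorphism of a `GMod`. -/
def smulL (N : GMod k A 𝒜) (b : A) : N.M →ₗ[k] N.M where
  toFun m := b • m
  map_add' := smul_add b
  map_smul' c m := by
    show b • (c • m) = c • (b • m)
    rw [← algebraMap_smul A c m, ← algebraMap_smul A c (b • m), smul_smul, smul_smul,
      ← Algebra.commutes]

lemma cmpN_smul {N : GMod k A 𝒜} {d : ℕ} {b : A} (hb : b ∈ 𝒜 d) (m : N.M) (n : ℕ) :
    cmp N.gr n (b • m) = if d ≤ n then b • cmp N.gr (n - d) m else 0 := by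
  have := cmp_map_shift N.gr N.gr (smulL N b) d
    (fun j x hxj => by
      have h2 := SetLike.GradedSMul.smul_mem (A := 𝒜) (B := N.gr) hb hxj
      simpa [smulL, add_comm] using h2) m n
  simpa [smulL] using this

lemma gmod_gen_span {N : GMod k A 𝒜} {s : ℕ}
    (h : Submodule.span A ((N.gr s : Submodule k N.M) : Set N.M) = ⊤)
    (j : ℕ) (m : N.M) (hm : m ∈ N.gr j) :
    (j < s → m = 0) ∧
      m ∈ Submodule.span k {x : N.M | ∃ a ∈ 𝒜 (j - s), ∃ y ∈ N.gr s, x = a • y} := by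
  set W : ℕ → Submodule k N.M := fun n =>
    if n < s then ⊥ else
      Submodule.span k {x : N.M | ∃ a ∈ 𝒜 (n - s), ∃ y ∈ N.gr s, x = a • y} with hW
  have Wsmul : ∀ (i n : ℕ) (b : A), b ∈ 𝒜 i → ∀ x ∈ W n, b • x ∈ W (i + n) := by
    intro i n b hb x hx
    by_cases hn : n < s
    · rw [hW] at hx
      simp only [if_pos hn, Submodule.mem_bot] at hx
      rw [hx, smul_zero]
      exact zero_mem _
    · have hx' := hx
      rw [hW] at hx'
      simp only [if_neg hn] at hx'
      have hmap : smulL N b x ∈ Submodule.map (smulL N b)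
          (Submodule.span k {x : N.M | ∃ a ∈ 𝒜 (n - s), ∃ y ∈ N.gr s, x = a • y}) :=
        Submodule.mem_map_of_mem hx'
      rw [Submodule.map_span] at hmap
      have hle : Submodule.span k ((smulL N b) ''
          {x : N.M | ∃ a ∈ 𝒜 (n - s), ∃ y ∈ N.gr s, x = a • y}) ≤ W (i + n) := by
        apply Submodule.span_le.mpr
        rintro _ ⟨_, ⟨a, ha, y, hy, rfl⟩, rfl⟩
        rw [hW]
        simp only [if_neg (by omega : ¬ i + n < s)]
        apply Submodule.subset_span
        refine ⟨b * a, ?_, y, hy, ?_⟩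
        · have hba := SetLike.mul_mem_graded hb ha
          rwa [(by omega : i + (n - s) = i + n - s)] at hba
        · show (smulL N b) (a • y) = (b * a) • y
          show b • (a • y) = (b * a) • y
          rw [smul_smul]
      exact hle hmap
  have key : ∀ m' : N.M, ∀ n, cmp N.gr n m' ∈ W n := by
    intro m'
    have hm' : m' ∈ Submodule.span A ((N.gr s : Submodule k N.M) : Set N.M) := by
      rw [h]; trivial
    induction hm' using Submodule.span_induction with
    | mem y hy =>
        intro n
        by_cases hn : n = s
        · rw [hn, cmp_same N.gr hy, hW]
          simp only [if_neg (lt_irrefl s)]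
          apply Submodule.subset_span
          refine ⟨1, ?_, y, hy, (one_smul A y).symm⟩
          rw [Nat.sub_self]
          exact SetLike.one_mem_graded 𝒜
        · rw [cmp_ne N.gr hy (fun hc => hn hc.symm)]
          exact zero_mem _
    | zero => intro n; rw [map_zero]; exact zero_mem _
    | add u v _ _ hu hv => intro n; rw [map_add]; exact add_mem (hu n) (hv n)
    | smul a u _ hu =>
        intro n
        obtain ⟨t, ht⟩ := cmp_sum 𝒜 a
        have hau : a • u = ∑ i ∈ t, cmp 𝒜 i a • u := by rw [← Finset.sum_smul, ← ht]
        rw [hau, map_sum]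
        apply Submodule.sum_mem
        intro i _
        rw [cmpN_smul (cmp_mem 𝒜 i a)]
        split
        · rename_i hle
          have := Wsmul i (n - i) _ (cmp_mem 𝒜 i a) _ (hu (n - i))
          rwa [(by omega : i + (n - i) = n)] at this
        · exact zero_mem _
  have hj := key m j
  rw [cmp_same N.gr hm] at hj
  constructor
  · intro hjs
    rw [hW] at hj
    simp only [if_pos hjs, Submodule.mem_bot] at hj
    exact hj
  · by_cases hjs : j < s
    · rw [hW] at hj
      simp only [if_pos hjs, Submodule.mem_bot] at hj
      rw [hj]
      exact zero_mem _
    · rw [hW] at hj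
      simpa [if_neg hjs] using hj

end GModLemmas

section Zmod
open GenK
variable (k A : Type) [Field k] [Ring A] [Algebra k A] (𝒜 : ℕ → Submodule k A)
  [GradedAlgebra 𝒜]

noncomputable def Zgr : ℕ → Submodule k (A ⧸ Jideal k A 𝒜) := fun j =>
  match j with
  | 0 => ⊤
  | _ + 1 => ⊥

lemma Zgr_ne {j : ℕ} (hj : j ≠ 0) : Zgr k A 𝒜 j = ⊥ := by
  match j with
  | 0 => exact absurd rfl hj
  | m + 1 => rfl

lemma Zmod_findim (hloc0 : FiniteDimensional k (𝒜 0)) :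
    FiniteDimensional k (A ⧸ Jideal k A 𝒜) := by
  apply FiniteDimensional.of_surjective
    ((((Jideal k A 𝒜).mkQ).restrictScalars k).comp (𝒜 0).subtype)
  intro z
  obtain ⟨a, rfl⟩ := Submodule.Quotient.mk_surjective _ z
  refine ⟨⟨cmp 𝒜 0 a, cmp_mem 𝒜 0 a⟩, ?_⟩
  show Submodule.Quotient.mk (cmp 𝒜 0 a) = Submodule.Quotient.mk a
  rw [Submodule.Quotient.eq]
  rw [mem_J_iff (𝒜 := 𝒜)]
  rw [map_sub, cmp_same 𝒜 (cmp_mem 𝒜 0 a), sub_self]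

noncomputable def Zmod (hloc0 : FiniteDimensional k (𝒜 0)) : GMod k A 𝒜 where
  M := A ⧸ Jideal k A 𝒜
  gr := Zgr k A 𝒜
  decomp :=
    { decompose' := fun m => DirectSum.of (fun i => ↥(Zgr k A 𝒜 i)) 0 ⟨m, Submodule.mem_top⟩
      left_inv := fun m => by rw [DirectSum.coeAddMonoidHom_of]
      right_inv := fun f => by
        induction f using DirectSum.induction_on with
        | zero =>
            rw [map_zero]
            beta_reduce
            have h0 : (⟨(0 : A ⧸ Jideal k A 𝒜), Submodule.mem_top⟩ : ↥(Zgr k A 𝒜 0)) = 0 :=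
              Subtype.ext rfl
            rw [h0, map_zero]
        | of i x =>
            beta_reduce
            rw [DirectSum.coeAddMonoidHom_of]
            cases i with
            | zero =>
                congr 1
            | succ m =>
                have hx : x = 0 := Subtype.ext ((Submodule.mem_bot k).mp x.2)
                subst hx
                have h0 : (⟨((0 : ↥(Zgr k A 𝒜 (m + 1))) : A ⧸ Jideal k A 𝒜),
                    Submodule.mem_top⟩ : ↥(Zgr k A 𝒜 0)) = 0 := Subtype.ext rfl
                rw [h0, map_zero, map_zero]
        | add f g hf hg =>
            beta_reduce
            rw [map_add]
            have hsplit : (⟨DirectSum.coeAddMonoidHom (Zgr k A 𝒜) f +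
                DirectSum.coeAddMonoidHom (Zgr k A 𝒜) g, Submodule.mem_top⟩ :
                  ↥(Zgr k A 𝒜 0)) =
                ⟨DirectSum.coeAddMonoidHom (Zgr k A 𝒜) f, Submodule.mem_top⟩ +
                ⟨DirectSum.coeAddMonoidHom (Zgr k A 𝒜) g, Submodule.mem_top⟩ :=
              Subtype.ext rfl
            rw [hsplit, map_add]
            beta_reduce at hf hg
            rw [hf, hg] }
  gsmul :=
    { smul_mem := by
        intro i j ai bi hi hj
        cases j with
        | zero =>
            cases i with
            | zero => exact Submodule.mem_top
            | succ m =>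
                obtain ⟨x, rfl⟩ := Submodule.Quotient.mk_surjective _ bi
                have : ai • (Submodule.Quotient.mk x : A ⧸ Jideal k A 𝒜) =
                    Submodule.Quotient.mk (ai * x) := by
                  rw [← Submodule.Quotient.mk_smul, smul_eq_mul]
                rw [this]
                show _ ∈ Zgr k A 𝒜 (m + 1 + 0)
                rw [(by omega : m + 1 + 0 = m + 1)]
                show (Submodule.Quotient.mk (ai * x) : A ⧸ Jideal k A 𝒜) ∈ ⊥
                rw [Submodule.mem_bot, Submodule.Quotient.mk_eq_zero, mem_J_iff (𝒜 := 𝒜),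
                  cmp_mul hi]
                simp
        | succ m =>
            have hbi : bi = 0 := (Submodule.mem_bot k).mp hj
            subst hbi
            rw [smul_zero]
            exact zero_mem _ }
  locFin := by
    intro i
    haveI := Zmod_findim k A 𝒜 hloc0
    cases i with
    | zero => infer_instance
    | succ m => infer_instance

lemma Zmod_degzero (hloc0 : FiniteDimensional k (𝒜 0)) :
    IsDegZeroPart (Zmod k A 𝒜 hloc0) := by
  refine ⟨(Jideal k A 𝒜).mkQ, Submodule.mkQ_surjective _, Submodule.ker_mkQ _, ?_⟩
  intro j hj
  exact Zgr_ne k A 𝒜 hj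

end Zmod

section Tower
open GenK
variable {k A : Type} [Field k] [Ring A] [Algebra k A] {𝒜 : ℕ → Submodule k A}
  [GradedAlgebra 𝒜] {Z : GMod k A 𝒜} (TW : SyzTower Z)

lemma exists_g (q₀ : A →ₗ[A] (TW.N 0).M) (hq₀s : Function.Surjective q₀)
    (hq₀k : LinearMap.ker q₀ = Jideal k A 𝒜) (hgr0 : ∀ j, j ≠ 0 → (TW.N 0).gr j = ⊥) :
    ∃ g : A →ₗ[A] (TW.P 0).M, Function.Bijective g ∧
      (∀ j, ∀ a ∈ 𝒜 j, g a ∈ (TW.P 0).gr j) ∧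
      (∀ a, TW.p 0 (g a) = q₀ a) := by
  obtain ⟨w, hw⟩ := TW.surj 0 (q₀ 1)
  set u := cmp (TW.P 0).gr 0 w with hu
  have hpu : TW.p 0 u = q₀ 1 := by
    have h1 : cmp (TW.N 0).gr 0 (((TW.p 0).restrictScalars k) w) =
        ((TW.p 0).restrictScalars k) (cmp (TW.P 0).gr 0 w) :=
      cmp_map (TW.P 0).gr (TW.N 0).gr ((TW.p 0).restrictScalars k)
        (fun j x hx => TW.graded 0 j x hx) w 0
    have h2 : ((TW.p 0).restrictScalars k) w = TW.p 0 w := rfl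
    rw [h2, hw, cmp_eq_self_of_conc _ hgr0] at h1
    exact h1.symm
  set g : A →ₗ[A] (TW.P 0).M :=
    { toFun := fun a => a • u
      map_add' := fun a b => add_smul a b u
      map_smul' := fun a b => by simp [smul_eq_mul, mul_smul] } with hgdef
  have hpg : ∀ a, TW.p 0 (g a) = q₀ a := by
    intro a
    show TW.p 0 (a • u) = q₀ a
    rw [map_smul, hpu, ← map_smul, smul_eq_mul, mul_one]
  have hggr : ∀ j, ∀ a ∈ 𝒜 j, g a ∈ (TW.P 0).gr j := by
    intro j a ha
    have := SetLike.GradedSMul.smul_mem (A := 𝒜) (B := (TW.P 0).gr) ha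
      (cmp_mem (TW.P 0).gr 0 w)
    have h' : g a = a • cmp (TW.P 0).gr 0 w := rfl
    rw [h']
    simpa using this
  have hrange : LinearMap.range g ⊔ LinearMap.ker (TW.p 0) = ⊤ := by
    rw [eq_top_iff]
    intro y _
    obtain ⟨a, ha⟩ := hq₀s (TW.p 0 y)
    refine Submodule.mem_sup.mpr ⟨g a, ⟨a, rfl⟩, y - g a, ?_, by abel⟩
    rw [LinearMap.mem_ker, map_sub, hpg, ha, sub_self]
  have hsurj : Function.Surjective g := by
    rw [← LinearMap.range_eq_top]
    exact TW.small 0 _ hrange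
  haveI := TW.proj 0
  obtain ⟨s', hs'⟩ := Module.projective_lifting_property g LinearMap.id hsurj
  have hids : ∀ y, g (s' y) = y := fun y => LinearMap.congr_fun hs' y
  set x := 1 - s' (g 1) with hxdef
  have hsga : ∀ a : A, s' (g a) = a * s' (g 1) := by
    intro a
    have h3 : g a = a • g 1 := by rw [← map_smul, smul_eq_mul, mul_one]
    rw [h3, map_smul, smul_eq_mul]
  have hker : ∀ a, g a = 0 → a = a * x := by
    intro a hga
    have h4 : s' (g a) = 0 := by rw [hga, map_zero]
    rw [hsga] at h4
    rw [hxdef, mul_sub, mul_one, h4, sub_zero]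
  have hgx : g x = 0 := by
    rw [hxdef, map_sub, hids (g 1), sub_self]
  have hxJ : x ∈ Jideal k A 𝒜 := by
    rw [← hq₀k, LinearMap.mem_ker, ← hpg x, hgx, map_zero]
  have hx0 : x = 0 := idem_J hxJ (hker x hgx).symm
  refine ⟨g, ⟨?_, hsurj⟩, hggr, hpg⟩
  intro a b hab
  have h5 : g (a - b) = 0 := by rw [map_sub, hab, sub_self]
  have h6 := hker _ h5
  rw [hx0, mul_zero] at h6
  exact sub_eq_zero.mp h6

lemma N2span (hgen2 : (TW.P 2).gen 2) :
    Submodule.span A (((TW.N 2).gr 2 : Submodule k (TW.N 2).M) : Set (TW.N 2).M) = ⊤ := by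
  have hmap := congrArg (Submodule.map (TW.p 2)) hgen2
  rw [Submodule.map_span, Submodule.map_top, LinearMap.range_eq_top.mpr (TW.surj 2)] at hmap
  rw [eq_top_iff, ← hmap]
  apply Submodule.span_mono
  rintro _ ⟨x, hx, rfl⟩
  exact TW.graded 2 2 x hx

lemma iota_graded (i : ℕ) : ∀ j, ∀ x ∈ (TW.N (i+1)).gr j,
    ((TW.ι i).restrictScalars k) x ∈ (TW.P i).gr j := by
  intro j x hx
  rw [TW.gr_eq i j] at hx
  exact hx

lemma kerp1_span
    (hN2 : Submodule.span A (((TW.N 2).gr 2 : Submodule k (TW.N 2).M) : Set (TW.N 2).M) = ⊤)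
    (d : ℕ) (y : (TW.P 1).M) (hker : TW.p 1 y = 0) (hgr : y ∈ (TW.P 1).gr (d + 2)) :
    y ∈ Submodule.span k {x : (TW.P 1).M |
      ∃ a ∈ 𝒜 d, ∃ w, TW.p 1 w = 0 ∧ w ∈ (TW.P 1).gr 2 ∧ x = a • w} := by
  have hy : y ∈ LinearMap.range (TW.ι 1) := by rw [TW.rng 1]; exact hker
  obtain ⟨z, hz⟩ := hy
  have hcmp : cmp (TW.P 1).gr (d+2) (((TW.ι 1).restrictScalars k) z) =
      ((TW.ι 1).restrictScalars k) (cmp (TW.N 2).gr (d+2) z) :=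
    cmp_map _ _ ((TW.ι 1).restrictScalars k) (iota_graded TW 1) z (d+2)
  have hz' : ((TW.ι 1).restrictScalars k) z = y := hz
  rw [hz', cmp_same (TW.P 1).gr hgr] at hcmp
  have hzn := (gmod_gen_span hN2 (d+2) (cmp (TW.N 2).gr (d+2) z)
    (cmp_mem (TW.N 2).gr (d+2) z)).2
  rw [Nat.add_sub_cancel] at hzn
  have hmap : ((TW.ι 1).restrictScalars k) (cmp (TW.N 2).gr (d+2) z) ∈
      Submodule.map ((TW.ι 1).restrictScalars k) (Submodule.span k
        {x : (TW.N 2).M | ∃ a ∈ 𝒜 d, ∃ y ∈ (TW.N 2).gr 2, x = a • y}) :=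
    Submodule.mem_map_of_mem hzn
  rw [Submodule.map_span] at hmap
  rw [hcmp]
  refine (Submodule.span_le.mpr ?_) hmap
  rintro _ ⟨_, ⟨a, ha, ζ, hζ, rfl⟩, rfl⟩
  apply Submodule.subset_span
  refine ⟨a, ha, TW.ι 1 ζ, ?_, ?_, ?_⟩
  · rw [← LinearMap.mem_ker, ← TW.rng 1]; exact ⟨ζ, rfl⟩
  · exact iota_graded TW 1 2 ζ hζ
  · show TW.ι 1 (a • ζ) = a • TW.ι 1 ζ
    exact map_smul (TW.ι 1) a ζ

lemma p1_inj_gr1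
    (hN2 : Submodule.span A (((TW.N 2).gr 2 : Submodule k (TW.N 2).M) : Set (TW.N 2).M) = ⊤) :
    ∀ x ∈ (TW.P 1).gr 1, TW.p 1 x = 0 → x = 0 := by
  intro x hx hpx
  have hxr : x ∈ LinearMap.range (TW.ι 1) := by rw [TW.rng 1]; exact hpx
  obtain ⟨z, hz⟩ := hxr
  have hcmp : cmp (TW.P 1).gr 1 (((TW.ι 1).restrictScalars k) z) =
      ((TW.ι 1).restrictScalars k) (cmp (TW.N 2).gr 1 z) :=
    cmp_map _ _ ((TW.ι 1).restrictScalars k) (iota_graded TW 1) z 1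
  have hz' : ((TW.ι 1).restrictScalars k) z = x := hz
  rw [hz', cmp_same (TW.P 1).gr hx] at hcmp
  have h0 : cmp (TW.N 2).gr 1 z = 0 :=
    (gmod_gen_span hN2 1 (cmp (TW.N 2).gr 1 z) (cmp_mem (TW.N 2).gr 1 z)).1 (by omega)
  rw [h0] at hcmp
  rw [hcmp]
  exact map_zero _

end Tower

section TowerLam
open GenK
variable {k A : Type} [Field k] [Ring A] [Algebra k A] {𝒜 : ℕ → Submodule k A}
  [GradedAlgebra 𝒜] {Z : GMod k A 𝒜} (TW : SyzTower Z)
variable {T : Type} [Ring T] [Algebra k T] {𝒯 : ℕ → Submodule k T} [GradedAlgebra 𝒯]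
variable (q : T →ₐ[k] A)

lemma exists_lam
    (hqgr : ∀ i, (𝒯 i).map q.toLinearMap = 𝒜 i)
    (hq01 : ∀ x ∈ (𝒯 0 ⊔ 𝒯 1 : Submodule k T), q x = 0 → x = 0)
    (q₀ : A →ₗ[A] (TW.N 0).M) (hq₀k : LinearMap.ker q₀ = Jideal k A 𝒜)
    (g : A →ₗ[A] (TW.P 0).M) (hgb : Function.Bijective g)
    (hggr : ∀ j, ∀ a ∈ 𝒜 j, g a ∈ (TW.P 0).gr j) (hpg : ∀ a, TW.p 0 (g a) = q₀ a)
    (hN2 : Submodule.span A (((TW.N 2).gr 2 : Submodule k (TW.N 2).M) : Set (TW.N 2).M) = ⊤) :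
    ∃ lam : ↥(𝒯 1) →ₗ[k] (TW.P 1).M,
      (∀ v, lam v ∈ (TW.P 1).gr 1) ∧
      (∀ v, TW.ι 0 (TW.p 1 (lam v)) = g (q v.1)) ∧
      Function.Injective lam ∧
      (∀ y ∈ (TW.P 1).gr 1, ∃ v, lam v = y) ∧
      (∀ (c : ↥(𝒯 0)) (w : ↥(𝒯 1)),
        lam ⟨c.1 * w.1, by simpa using SetLike.mul_mem_graded c.2 w.2⟩ = q c.1 • lam w) := by
  -- injectivity of ι₀ ∘ p₁ on degree-1 part
  have injOn : ∀ y ∈ (TW.P 1).gr 1, ∀ y' ∈ (TW.P 1).gr 1,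
      TW.ι 0 (TW.p 1 y) = TW.ι 0 (TW.p 1 y') → y = y' := by
    intro y hy y' hy' h
    have h1 : TW.p 1 y = TW.p 1 y' := TW.inj 0 h
    have h2 : TW.p 1 (y - y') = 0 := by rw [map_sub, h1, sub_self]
    have h3 : y - y' ∈ (TW.P 1).gr 1 := sub_mem hy hy'
    have := p1_inj_gr1 TW hN2 _ h3 h2
    exact sub_eq_zero.mp this
  -- mem facts
  have hq1mem : ∀ v : ↥(𝒯 1), q v.1 ∈ 𝒜 1 := by
    intro v; rw [← hqgr 1]; exact ⟨v.1, v.2, rfl⟩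
  have hq0mem : ∀ c : ↥(𝒯 0), q c.1 ∈ 𝒜 0 := by
    intro c; rw [← hqgr 0]; exact ⟨c.1, c.2, rfl⟩
  have hA1J : ∀ a ∈ 𝒜 1, a ∈ Jideal k A 𝒜 := by
    intro a ha
    rw [mem_J_iff (𝒜 := 𝒜)]
    exact cmp_ne 𝒜 ha (by omega)
  have hgrk : ∀ (a : A), (g.restrictScalars k) a = g a := fun a => rfl
  -- the degree-1 surjectivity of p 1
  have hp1surj : ∀ ybar ∈ (TW.N 1).gr 1, ∃ y ∈ (TW.P 1).gr 1, TW.p 1 y = ybar := by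
    intro ybar hybar
    obtain ⟨m, hm⟩ := TW.surj 1 ybar
    refine ⟨cmp (TW.P 1).gr 1 m, cmp_mem _ _ _, ?_⟩
    have hc : cmp (TW.N 1).gr 1 (((TW.p 1).restrictScalars k) m) =
        ((TW.p 1).restrictScalars k) (cmp (TW.P 1).gr 1 m) :=
      cmp_map _ _ ((TW.p 1).restrictScalars k) (fun j x hx => TW.graded 1 j x hx) m 1
    have hm' : ((TW.p 1).restrictScalars k) m = ybar := hm
    rw [hm', cmp_same (TW.N 1).gr hybar] at hc
    exact hc.symm
  -- construct lam via choice, then prove linearity via injOn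
  have hstep : ∀ v : ↥(𝒯 1), ∃ y ∈ (TW.P 1).gr 1, TW.ι 0 (TW.p 1 y) = g (q v.1) := by
    intro v
    -- g (q v) ∈ ker (p 0) and in degree 1
    have hgq1 : g (q v.1) ∈ (TW.P 0).gr 1 := hggr 1 _ (hq1mem v)
    have hgqker : TW.p 0 (g (q v.1)) = 0 := by
      rw [hpg]
      have : q v.1 ∈ LinearMap.ker q₀ := by rw [hq₀k]; exact hA1J _ (hq1mem v)
      exact this
    -- hence in range ι₀
    have hrg : g (q v.1) ∈ LinearMap.range (TW.ι 0) := by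
      rw [TW.rng 0]; exact hgqker
    obtain ⟨z, hz⟩ := hrg
    -- z is in degree 1 component of N 1
    have hz1 : TW.ι 0 (cmp (TW.N 1).gr 1 z) = g (q v.1) := by
      have hc : cmp (TW.P 0).gr 1 (((TW.ι 0).restrictScalars k) z) =
          ((TW.ι 0).restrictScalars k) (cmp (TW.N 1).gr 1 z) :=
        cmp_map _ _ ((TW.ι 0).restrictScalars k) (iota_graded TW 0) z 1
      have hz' : ((TW.ι 0).restrictScalars k) z = g (q v.1) := hz
      rw [hz', cmp_same (TW.P 0).gr hgq1] at hc
      exact hc.symm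
    obtain ⟨y, hy1, hy2⟩ := hp1surj (cmp (TW.N 1).gr 1 z) (cmp_mem _ _ _)
    exact ⟨y, hy1, by rw [hy2, hz1]⟩
  choose lam0 hlam0gr hlam0 using hstep
  -- linearity of lam0
  have hadd : ∀ v w : ↥(𝒯 1), lam0 (v + w) = lam0 v + lam0 w := by
    intro v w
    apply injOn _ (hlam0gr _) _ (add_mem (hlam0gr v) (hlam0gr w))
    rw [map_add, map_add, hlam0, hlam0, hlam0]
    rw [Submodule.coe_add, map_add, map_add]
  have hsmul : ∀ (c : k) (v : ↥(𝒯 1)), lam0 (c • v) = c • lam0 v := by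
    intro c v
    have hmem : c • lam0 v ∈ (TW.P 1).gr 1 := Submodule.smul_mem _ c (hlam0gr v)
    apply injOn _ (hlam0gr _) _ hmem
    rw [hlam0, Submodule.coe_smul, map_smul, LinearMap.map_smul_of_tower,
      LinearMap.map_smul_of_tower, LinearMap.map_smul_of_tower, hlam0]
  set lam : ↥(𝒯 1) →ₗ[k] (TW.P 1).M :=
    { toFun := lam0
      map_add' := hadd
      map_smul' := hsmul } with hlamdef
  have hlam : ∀ v, TW.ι 0 (TW.p 1 (lam v)) = g (q v.1) := hlam0
  have hlamgr : ∀ v, lam v ∈ (TW.P 1).gr 1 := hlam0gr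
  refine ⟨lam, hlamgr, hlam, ?_, ?_, ?_⟩
  · -- injective
    intro v v' h
    have h1 : g (q v.1) = g (q v'.1) := by rw [← hlam, ← hlam, h]
    have h2 : q v.1 = q v'.1 := hgb.1 h1
    have h3 : q (v.1 - v'.1) = 0 := by rw [map_sub, h2, sub_self]
    have h4 : v.1 - v'.1 = 0 := hq01 _
      (Submodule.mem_sup_right (sub_mem v.2 v'.2)) h3
    exact Subtype.ext (sub_eq_zero.mp h4)
  · -- surjective onto degree 1
    intro y hy
    -- p 1 y ∈ (N 1).gr 1, so ι₀ (p 1 y) ∈ ker p₀ ∩ gr 1 = g '' (𝒜 1)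
    have hny : TW.p 1 y ∈ (TW.N 1).gr 1 := TW.graded 1 1 y hy
    have hky : TW.ι 0 (TW.p 1 y) ∈ (TW.P 0).gr 1 := iota_graded TW 0 1 _ hny
    obtain ⟨a, ha⟩ := hgb.2 (TW.ι 0 (TW.p 1 y))
    -- a may be replaced by its degree-1 component
    have hc : cmp (TW.P 0).gr 1 ((g.restrictScalars k) a) =
        (g.restrictScalars k) (cmp 𝒜 1 a) :=
      cmp_map _ _ (g.restrictScalars k) (fun j x hx => hggr j x hx) a 1
    rw [hgrk, hgrk, ha, cmp_same (TW.P 0).gr hky] at hc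
    -- get the 𝒯 1 element
    have hmem : cmp 𝒜 1 a ∈ (𝒯 1).map q.toLinearMap := by rw [hqgr 1]; exact cmp_mem 𝒜 1 a
    obtain ⟨t, ht, hqt⟩ := hmem
    refine ⟨⟨t, ht⟩, ?_⟩
    apply injOn _ (hlamgr _) _ hy
    rw [hlam]
    show g (q t) = _
    have hqt' : q t = cmp 𝒜 1 a := hqt
    rw [hqt', ← hc]
  · -- left 𝒯 0 linearity
    intro c w
    have hcw1 : (c.1 * w.1) ∈ 𝒯 1 := by simpa using SetLike.mul_mem_graded c.2 w.2
    have hmem2 : q c.1 • lam w ∈ (TW.P 1).gr 1 := by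
      have := SetLike.GradedSMul.smul_mem (A := 𝒜) (B := (TW.P 1).gr) (hq0mem c) (hlamgr w)
      simpa using this
    apply injOn _ (hlamgr _) _ hmem2
    rw [hlam]
    show g (q (c.1 * w.1)) = TW.ι 0 (TW.p 1 (q c.1 • lam w))
    rw [map_smul, map_smul, hlam]
    rw [map_mul]
    show g (q c.1 • q w.1) = q c.1 • g (q w.1)
    rw [map_smul]

end TowerLam

section Chi
open GenK
variable {k A : Type} [Field k] [Ring A] [Algebra k A] {𝒜 : ℕ → Submodule k A}
  [GradedAlgebra 𝒜] {Z : GMod k A 𝒜} (TW : SyzTower Z)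
variable {T : Type} [Ring T] [Algebra k T] {𝒯 : ℕ → Submodule k T} [GradedAlgebra 𝒯]
variable (q : T →ₐ[k] A)

lemma exists_chi
    (hTmul : ∀ i j, 𝒯 i * 𝒯 j = 𝒯 (i + j))
    (hqgr : ∀ i, (𝒯 i).map q.toLinearMap = 𝒜 i)
    (hq01 : ∀ x ∈ (𝒯 0 ⊔ 𝒯 1 : Submodule k T), q x = 0 → x = 0)
    (hfree : ∀ (B : Type) [Ring B] [Algebra k B]
      (g₀ : ↥(𝒯 0) →ₗ[k] B) (g₁ : ↥(𝒯 1) →ₗ[k] B),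
      g₀ ⟨1, SetLike.one_mem_graded 𝒯⟩ = 1 →
      (∀ a b : ↥(𝒯 0),
        g₀ ⟨a.1 * b.1, by simpa using SetLike.mul_mem_graded a.2 b.2⟩ = g₀ a * g₀ b) →
      (∀ (a : ↥(𝒯 0)) (m : ↥(𝒯 1)),
        g₁ ⟨a.1 * m.1, by simpa using SetLike.mul_mem_graded a.2 m.2⟩ = g₀ a * g₁ m) →
      (∀ (m : ↥(𝒯 1)) (a : ↥(𝒯 0)),
        g₁ ⟨m.1 * a.1, by simpa using SetLike.mul_mem_graded m.2 a.2⟩ = g₁ m * g₀ a) →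
      ∃! F : T →ₐ[k] B, (∀ a : ↥(𝒯 0), F a.1 = g₀ a) ∧ (∀ m : ↥(𝒯 1), F m.1 = g₁ m))
    (lam : ↥(𝒯 1) →ₗ[k] (TW.P 1).M)
    (hlamA0 : ∀ (c : ↥(𝒯 0)) (w : ↥(𝒯 1)),
        lam ⟨c.1 * w.1, by simpa using SetLike.mul_mem_graded c.2 w.2⟩ = q c.1 • lam w) :
    ∃ χ : T →ₗ[k] (TW.P 1).M,
      (∀ v : ↥(𝒯 1), χ v.1 = lam v) ∧
      (∀ (t : T) (v : ↥(𝒯 1)), χ (t * v.1) = q t • lam v) ∧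
      (∀ (s x : T), cmp 𝒜 0 (q x) = 0 → χ (s * x) = q s • χ x) ∧
      (∀ c ∈ 𝒯 0, χ c = 0) := by
  have hq0inj : ∀ c c' : ↥(𝒯 0), q c.1 = q c'.1 → c = c' := by
    intro c c' h
    have h3 : q (c.1 - c'.1) = 0 := by rw [map_sub, h, sub_self]
    exact Subtype.ext (sub_eq_zero.mp
      (hq01 _ (Submodule.mem_sup_left (sub_mem c.2 c'.2)) h3))
  have hq1mem : ∀ v : ↥(𝒯 1), q v.1 ∈ 𝒜 1 := by
    intro v; rw [← hqgr 1]; exact ⟨v.1, v.2, rfl⟩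
  -- the inverse of q in degree 0
  have hstep0 : ∀ a : A, ∃ c : ↥(𝒯 0), q c.1 = cmp 𝒜 0 a := by
    intro a
    have : cmp 𝒜 0 a ∈ (𝒯 0).map q.toLinearMap := by rw [hqgr 0]; exact cmp_mem 𝒜 0 a
    obtain ⟨t, ht, hqt⟩ := this
    exact ⟨⟨t, ht⟩, hqt⟩
  choose e0 he0 using hstep0
  have he0add : ∀ a b, e0 (a + b) = e0 a + e0 b := by
    intro a b
    apply hq0inj
    rw [he0, map_add, Submodule.coe_add, map_add, he0, he0]
  have he0smul : ∀ (c : k) (a : A), e0 (c • a) = c • e0 a := by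
    intro c a
    apply hq0inj
    rw [he0, map_smul, Submodule.coe_smul, map_smul, he0]
  set eA : A →ₗ[k] ↥(𝒯 0) :=
    { toFun := e0
      map_add' := he0add
      map_smul' := he0smul } with heAdef
  have heA : ∀ a, q (eA a).1 = cmp 𝒜 0 a := he0
  have he1 : eA 1 = ⟨1, SetLike.one_mem_graded 𝒯⟩ := by
    apply hq0inj
    rw [heA, cmp_same 𝒜 (SetLike.one_mem_graded 𝒜),
      show ((⟨1, SetLike.one_mem_graded 𝒯⟩ : ↥(𝒯 0)) : T) = 1 from rfl, map_one]
  have heA0 : ∀ a, cmp 𝒜 0 a = 0 → eA a = 0 := by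
    intro a ha
    apply hq0inj
    rw [heA, ha, ZeroMemClass.coe_zero, map_zero]
  have hemul : ∀ (c : ↥(𝒯 0)) (a : A),
      eA (q c.1 * a) =
        ⟨c.1 * (eA a).1, by simpa using SetLike.mul_mem_graded c.2 (eA a).2⟩ := by
    intro c a
    apply hq0inj
    rw [heA]
    have hc0 : q c.1 ∈ 𝒜 0 := by rw [← hqgr 0]; exact ⟨c.1, c.2, rfl⟩
    have h1 : cmp 𝒜 0 (q c.1 * a) = q c.1 * cmp 𝒜 0 a := by
      rw [cmp_mul hc0]; simp
    rw [h1]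
    show q c.1 * cmp 𝒜 0 a = q (c.1 * (eA a).1)
    rw [map_mul, heA]
  -- bilinear building block
  set vmulE : ↥(𝒯 1) → (A →ₗ[k] ↥(𝒯 1)) := fun v =>
    { toFun := fun a =>
        ⟨v.1 * (eA a).1, by simpa using SetLike.mul_mem_graded v.2 (eA a).2⟩
      map_add' := fun a b => Subtype.ext (by
        show v.1 * (eA (a + b)).1 = _
        rw [map_add, Submodule.coe_add, mul_add]
        rfl)
      map_smul' := fun c a => Subtype.ext (by
        show v.1 * (eA (c • a)).1 = _
        rw [map_smul, Submodule.coe_smul, mul_smul_comm]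
        rfl) } with hvmulE
  have vmulEapp : ∀ (v : ↥(𝒯 1)) (a : A), (vmulE v a).1 = v.1 * (eA a).1 :=
    fun v a => rfl
  have hvadd : ∀ (v v' : ↥(𝒯 1)) (a : A), vmulE (v + v') a = vmulE v a + vmulE v' a :=
    fun v v' a => Subtype.ext (by
      rw [Submodule.coe_add, vmulEapp, vmulEapp, vmulEapp, Submodule.coe_add, add_mul])
  have hvsmul : ∀ (s : k) (v : ↥(𝒯 1)) (a : A), vmulE (s • v) a = s • vmulE v a :=
    fun s v a => Subtype.ext (by
      rw [Submodule.coe_smul, vmulEapp, vmulEapp, Submodule.coe_smul, smul_mul_assoc])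
  -- endomorphisms
  set g0fun : ↥(𝒯 0) → Module.End k (A × (TW.P 1).M) := fun c =>
    ((LinearMap.mulLeft k (q c.1)).comp (LinearMap.fst k A (TW.P 1).M)).prod
      ((smulL (TW.P 1) (q c.1)).comp (LinearMap.snd k A (TW.P 1).M)) with hg0fun
  have g0app : ∀ (c : ↥(𝒯 0)) (a : A) (p : (TW.P 1).M),
      g0fun c (a, p) = (q c.1 * a, q c.1 • p) := fun c a p => rfl
  set g1fun : ↥(𝒯 1) → Module.End k (A × (TW.P 1).M) := fun v =>
    ((LinearMap.mulLeft k (q v.1)).comp (LinearMap.fst k A (TW.P 1).M)).prod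
      (((smulL (TW.P 1) (q v.1)).comp (LinearMap.snd k A (TW.P 1).M)) +
        ((lam.comp (vmulE v)).comp (LinearMap.fst k A (TW.P 1).M))) with hg1fun
  have g1app : ∀ (v : ↥(𝒯 1)) (a : A) (p : (TW.P 1).M),
      g1fun v (a, p) = (q v.1 * a, q v.1 • p + lam (vmulE v a)) := fun v a p => rfl
  set g0 : ↥(𝒯 0) →ₗ[k] Module.End k (A × (TW.P 1).M) :=
    { toFun := g0fun
      map_add' := fun c c' => by
        apply LinearMap.ext
        rintro ⟨a, p⟩
        rw [LinearMap.add_apply, g0app, g0app, g0app]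
        show (q (c.1 + c'.1) * a, q (c.1 + c'.1) • p) = _
        rw [map_add, add_mul, add_smul]
        rfl
      map_smul' := fun s c => by
        apply LinearMap.ext
        rintro ⟨a, p⟩
        rw [RingHom.id_apply, LinearMap.smul_apply, g0app, g0app]
        show (q (s • c.1) * a, q (s • c.1) • p) = _
        rw [map_smul, smul_mul_assoc, smul_assoc]
        rfl } with hg0
  set g1 : ↥(𝒯 1) →ₗ[k] Module.End k (A × (TW.P 1).M) :=
    { toFun := g1fun
      map_add' := fun v v' => by
        apply LinearMap.ext
        rintro ⟨a, p⟩
        rw [LinearMap.add_apply, g1app, g1app, g1app]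
        show (q (v.1 + v'.1) * a, q (v.1 + v'.1) • p + lam (vmulE (v + v') a)) = _
        rw [map_add, add_mul, add_smul, hvadd, map_add]
        show _ = (q v.1 * a + q v'.1 * a, (q v.1 • p + lam (vmulE v a)) +
          (q v'.1 • p + lam (vmulE v' a)))
        rw [Prod.mk.injEq]
        constructor
        · rfl
        · abel
      map_smul' := fun s v => by
        apply LinearMap.ext
        rintro ⟨a, p⟩
        rw [RingHom.id_apply, LinearMap.smul_apply, g1app, g1app]
        show (q (s • v.1) * a, q (s • v.1) • p + lam (vmulE (s • v) a)) = _
        rw [map_smul, smul_mul_assoc, smul_assoc, hvsmul, map_smul]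
        show _ = s • (q v.1 * a, q v.1 • p + lam (vmulE v a))
        rw [Prod.smul_mk, smul_add] } with hg1
  -- the four conditions of the universal property
  have hone : g0 ⟨1, SetLike.one_mem_graded 𝒯⟩ = 1 := by
    apply LinearMap.ext
    rintro ⟨a, p⟩
    show g0fun _ (a, p) = (a, p)
    rw [g0app]
    show (q 1 * a, q 1 • p) = (a, p)
    rw [map_one, one_mul, one_smul]
  have hmul00 : ∀ a b : ↥(𝒯 0),
      g0 ⟨a.1 * b.1, by simpa using SetLike.mul_mem_graded a.2 b.2⟩ = g0 a * g0 b := by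
    intro c c'
    apply LinearMap.ext
    rintro ⟨a, p⟩
    show g0fun _ (a, p) = g0fun c (g0fun c' (a, p))
    rw [g0app, g0app, g0app]
    show (q (c.1 * c'.1) * a, q (c.1 * c'.1) • p) = _
    rw [map_mul, mul_assoc, mul_smul]
  have hmul01 : ∀ (c : ↥(𝒯 0)) (v : ↥(𝒯 1)),
      g1 ⟨c.1 * v.1, by simpa using SetLike.mul_mem_graded c.2 v.2⟩ = g0 c * g1 v := by
    intro c v
    apply LinearMap.ext
    rintro ⟨a, p⟩
    show g1fun _ (a, p) = g0fun c (g1fun v (a, p))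
    rw [g1app, g1app, g0app]
    show (q (c.1 * v.1) * a, q (c.1 * v.1) • p + lam (vmulE _ a)) =
      (q c.1 * (q v.1 * a), q c.1 • (q v.1 • p + lam (vmulE v a)))
    rw [map_mul, mul_assoc, mul_smul, smul_add, Prod.mk.injEq]
    refine ⟨rfl, ?_⟩
    have hval : vmulE (⟨c.1 * v.1, by simpa using SetLike.mul_mem_graded c.2 v.2⟩ : ↥(𝒯 1)) a
        = ⟨c.1 * (vmulE v a).1, by
            simpa using SetLike.mul_mem_graded c.2 (vmulE v a).2⟩ := by
      apply Subtype.ext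
      show (c.1 * v.1) * (eA a).1 = c.1 * (vmulE v a).1
      rw [vmulEapp, mul_assoc]
    rw [hval, hlamA0 c (vmulE v a)]
  have hmul10 : ∀ (v : ↥(𝒯 1)) (c : ↥(𝒯 0)),
      g1 ⟨v.1 * c.1, by simpa using SetLike.mul_mem_graded v.2 c.2⟩ = g1 v * g0 c := by
    intro v c
    apply LinearMap.ext
    rintro ⟨a, p⟩
    show g1fun _ (a, p) = g1fun v (g0fun c (a, p))
    rw [g1app, g0app, g1app]
    show (q (v.1 * c.1) * a, q (v.1 * c.1) • p + lam (vmulE _ a)) =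
      (q v.1 * (q c.1 * a), q v.1 • (q c.1 • p) + lam (vmulE v (q c.1 * a)))
    rw [map_mul, mul_assoc, mul_smul, Prod.mk.injEq]
    refine ⟨rfl, ?_⟩
    have hval : vmulE (⟨v.1 * c.1, by simpa using SetLike.mul_mem_graded v.2 c.2⟩ : ↥(𝒯 1)) a
        = vmulE v (q c.1 * a) := by
      apply Subtype.ext
      show (v.1 * c.1) * (eA a).1 = v.1 * (eA (q c.1 * a)).1
      rw [hemul, mul_assoc]
    rw [hval]
  obtain ⟨F, ⟨hF0, hF1⟩, -⟩ := hfree (Module.End k (A × (TW.P 1).M)) g0 g1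
    hone hmul00 hmul01 hmul10
  -- T is generated by degrees 0 and 1
  have Tgen : ∀ x : T, x ∈ Algebra.adjoin k ((𝒯 0 : Set T) ∪ (𝒯 1 : Set T)) := by
    have hTn : ∀ n, (𝒯 n : Set T) ⊆
        (Algebra.adjoin k ((𝒯 0 : Set T) ∪ (𝒯 1 : Set T)) : Set T) := by
      intro n
      induction n with
      | zero => exact fun x hx => Algebra.subset_adjoin (Or.inl hx)
      | succ m ih =>
          intro x hx
          have hx' : x ∈ 𝒯 m * 𝒯 1 := by rw [hTmul m 1]; exact hx
          refine Submodule.mul_induction_on hx' ?_ ?_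
          · intro u hu v hv
            exact mul_mem (ih hu) (Algebra.subset_adjoin (Or.inr hv))
          · intro u v hu hv
            exact add_mem hu hv
    intro x
    obtain ⟨s, hs⟩ := cmp_sum 𝒯 x
    rw [hs]
    exact sum_mem fun n _ => hTn n (cmp_mem 𝒯 n x)
  -- structure lemmas for F
  have FL1 : ∀ x : T, ∀ (a : A) (p : (TW.P 1).M), (F x (a, p)).1 = q x * a := by
    intro x
    induction Tgen x using Algebra.adjoin_induction with
    | mem y hy =>
        intro a p
        cases hy with
        | inl h => rw [hF0 ⟨y, h⟩]; rw [show g0 ⟨y, h⟩ = g0fun ⟨y, h⟩ from rfl, g0app]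
        | inr h => rw [hF1 ⟨y, h⟩]; rw [show g1 ⟨y, h⟩ = g1fun ⟨y, h⟩ from rfl, g1app]
    | algebraMap r =>
        intro a p
        rw [AlgHom.commutes, Module.algebraMap_end_apply]
        show r • a = q (algebraMap k T r) * a
        rw [AlgHom.commutes, Algebra.smul_def]
    | add x y hx hy ihx ihy =>
        intro a p
        rw [map_add, LinearMap.add_apply]
        show (F x (a, p)).1 + (F y (a, p)).1 = _
        rw [ihx, ihy, map_add, add_mul]
    | mul x y hx hy ihx ihy =>
        intro a p
        rw [map_mul, Module.End.mul_apply]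
        have h1 := ihx (F y (a, p)).1 (F y (a, p)).2
        rw [Prod.mk.eta] at h1
        rw [h1, ihy, map_mul, mul_assoc]
  have FL2 : ∀ x : T, ∀ p : (TW.P 1).M, F x (0, p) = (0, q x • p) := by
    intro x
    induction Tgen x using Algebra.adjoin_induction with
    | mem y hy =>
        intro p
        cases hy with
        | inl h =>
            rw [hF0 ⟨y, h⟩, show g0 ⟨y, h⟩ = g0fun ⟨y, h⟩ from rfl, g0app, mul_zero]
        | inr h =>
            rw [hF1 ⟨y, h⟩, show g1 ⟨y, h⟩ = g1fun ⟨y, h⟩ from rfl, g1app, mul_zero,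
              map_zero, map_zero, add_zero]
    | algebraMap r =>
        intro p
        rw [AlgHom.commutes, Module.algebraMap_end_apply, Prod.smul_mk, smul_zero]
        rw [AlgHom.commutes, algebraMap_smul]
    | add x y hx hy ihx ihy =>
        intro p
        rw [map_add, LinearMap.add_apply, ihx, ihy, Prod.mk_add_mk, add_zero, map_add,
          add_smul]
    | mul x y hx hy ihx ihy =>
        intro p
        rw [map_mul, Module.End.mul_apply, ihy, ihx, map_mul, mul_smul]
  have FL3 : ∀ x : T, ∀ a : A, cmp 𝒜 0 a = 0 → (F x (a, 0)).2 = 0 := by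
    intro x
    induction Tgen x using Algebra.adjoin_induction with
    | mem y hy =>
        intro a ha
        cases hy with
        | inl h =>
            rw [hF0 ⟨y, h⟩, show g0 ⟨y, h⟩ = g0fun ⟨y, h⟩ from rfl, g0app]
            show q y • (0 : (TW.P 1).M) = 0
            rw [smul_zero]
        | inr h =>
            rw [hF1 ⟨y, h⟩, show g1 ⟨y, h⟩ = g1fun ⟨y, h⟩ from rfl, g1app]
            show q y • (0 : (TW.P 1).M) + lam (vmulE ⟨y, h⟩ a) = 0
            have hv0 : vmulE ⟨y, h⟩ a = 0 := by
              apply Subtype.ext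
              rw [vmulEapp, heA0 a ha, ZeroMemClass.coe_zero, mul_zero]
              rfl
            rw [smul_zero, hv0, map_zero, add_zero]
    | algebraMap r =>
        intro a ha
        rw [AlgHom.commutes, Module.algebraMap_end_apply]
        show r • (0 : (TW.P 1).M) = 0
        rw [smul_zero]
    | add x y hx hy ihx ihy =>
        intro a ha
        rw [map_add, LinearMap.add_apply]
        show (F x (a, 0)).2 + (F y (a, 0)).2 = 0
        rw [ihx a ha, ihy a ha, add_zero]
    | mul x y hx hy ihx ihy =>
        intro a ha
        rw [map_mul, Module.End.mul_apply]
        have hy0 : F y (a, 0) = (q y * a, 0) :=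
          Prod.ext (FL1 y a 0) (ihy a ha)
        rw [hy0]
        exact ihx (q y * a) (cmp0_mul ha (q y))
  -- the map χ
  set chi : T →ₗ[k] (TW.P 1).M :=
    { toFun := fun x => (F x (1, 0)).2
      map_add' := fun x y => by
        show (F (x + y) (1, 0)).2 = _
        rw [map_add, LinearMap.add_apply]
        rfl
      map_smul' := fun c x => by
        show (F (c • x) (1, 0)).2 = _
        rw [map_smul, LinearMap.smul_apply]
        rfl } with hchidef
  have chiapp : ∀ x : T, chi x = (F x (1, 0)).2 := fun x => rfl
  have hF10 : ∀ x : T, F x (1, 0) = (q x, chi x) := by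
    intro x
    refine Prod.ext ?_ rfl
    rw [FL1, mul_one]
  -- property (a)
  have hchiv : ∀ v : ↥(𝒯 1), chi v.1 = lam v := by
    intro v
    rw [chiapp, hF1 v, show g1 v = g1fun v from rfl, g1app]
    show q v.1 • (0 : (TW.P 1).M) + lam (vmulE v 1) = lam v
    have hv1 : vmulE v 1 = v := by
      apply Subtype.ext
      rw [vmulEapp, he1]
      show v.1 * 1 = v.1
      rw [mul_one]
    rw [smul_zero, hv1, zero_add]
  -- property (b)
  have hchib : ∀ (t : T) (v : ↥(𝒯 1)), chi (t * v.1) = q t • lam v := by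
    intro t v
    rw [chiapp, map_mul, Module.End.mul_apply, hF10, hchiv]
    have hsplit : ((q v.1 : A), lam v) = ((q v.1 : A), 0) + ((0 : A), lam v) := by
      rw [Prod.mk_add_mk, add_zero, zero_add]
    rw [hsplit, map_add]
    show (F t (q v.1, 0)).2 + (F t (0, lam v)).2 = q t • lam v
    rw [FL3 t (q v.1) (cmp_ne 𝒜 (hq1mem v) (by omega)), FL2, zero_add]
  -- property (c)
  have hchic : ∀ (s x : T), cmp 𝒜 0 (q x) = 0 → chi (s * x) = q s • chi x := by
    intro s x hx
    rw [chiapp, map_mul, Module.End.mul_apply, hF10]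
    have hsplit : ((q x : A), chi x) = ((q x : A), 0) + ((0 : A), chi x) := by
      rw [Prod.mk_add_mk, add_zero, zero_add]
    rw [hsplit, map_add]
    show (F s (q x, 0)).2 + (F s (0, chi x)).2 = q s • chi x
    rw [FL3 s (q x) hx, FL2, zero_add]
  -- property (d)
  have hchi0 : ∀ c ∈ 𝒯 0, chi c = 0 := by
    intro c hc
    rw [chiapp, hF0 ⟨c, hc⟩, show g0 ⟨c, hc⟩ = g0fun ⟨c, hc⟩ from rfl, g0app]
    show q c • (0 : (TW.P 1).M) = 0
    rw [smul_zero]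
  exact ⟨chi, hchiv, hchib, hchic, hchi0⟩

end Chi

section ChiDerived
open GenK
variable {k A : Type} [Field k] [Ring A] [Algebra k A] {𝒜 : ℕ → Submodule k A}
  [GradedAlgebra 𝒜] {Z : GMod k A 𝒜} (TW : SyzTower Z)
variable {T : Type} [Ring T] [Algebra k T] {𝒯 : ℕ → Submodule k T} [GradedAlgebra 𝒯]
variable (q : T →ₐ[k] A)

lemma chi_graded
    (hTmul : ∀ i j, 𝒯 i * 𝒯 j = 𝒯 (i + j))
    (hqgr : ∀ i, (𝒯 i).map q.toLinearMap = 𝒜 i)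
    (lam : ↥(𝒯 1) →ₗ[k] (TW.P 1).M) (hlamgr : ∀ v, lam v ∈ (TW.P 1).gr 1)
    (chi : T →ₗ[k] (TW.P 1).M)
    (hchib : ∀ (t : T) (v : ↥(𝒯 1)), chi (t * v.1) = q t • lam v)
    (hchi0 : ∀ c ∈ 𝒯 0, chi c = 0) :
    ∀ j, ∀ x ∈ 𝒯 j, chi x ∈ (TW.P 1).gr j := by
  intro j
  match j with
  | 0 => intro x hx; rw [hchi0 x hx]; exact zero_mem _
  | n + 1 =>
      intro x hx
      have hx' : x ∈ 𝒯 n * 𝒯 1 := by rw [hTmul n 1]; exact hx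
      refine Submodule.mul_induction_on hx' ?_ ?_
      · intro t ht v hv
        rw [hchib t ⟨v, hv⟩]
        have hqt : q t ∈ 𝒜 n := by rw [← hqgr n]; exact ⟨t, ht, rfl⟩
        have := SetLike.GradedSMul.smul_mem (A := 𝒜) (B := (TW.P 1).gr) hqt
          (hlamgr ⟨v, hv⟩)
        simpa using this
      · intro u v hu hv
        rw [map_add]; exact add_mem hu hv

lemma chi_p1
    (hTmul : ∀ i j, 𝒯 i * 𝒯 j = 𝒯 (i + j))
    (g : A →ₗ[A] (TW.P 0).M)
    (lam : ↥(𝒯 1) →ₗ[k] (TW.P 1).M)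
    (hlam : ∀ v, TW.ι 0 (TW.p 1 (lam v)) = g (q v.1))
    (chi : T →ₗ[k] (TW.P 1).M)
    (hchib : ∀ (t : T) (v : ↥(𝒯 1)), chi (t * v.1) = q t • lam v) :
    ∀ n, ∀ x ∈ 𝒯 (n + 1), TW.ι 0 (TW.p 1 (chi x)) = g (q x) := by
  intro n x hx
  have hx' : x ∈ 𝒯 n * 𝒯 1 := by rw [hTmul n 1]; exact hx
  refine Submodule.mul_induction_on hx' ?_ ?_
  · intro t ht v hv
    rw [hchib t ⟨v, hv⟩, map_smul, map_smul, hlam ⟨v, hv⟩, ← map_smul, smul_eq_mul,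
      ← map_mul]
  · intro u v hu hv
    rw [map_add, map_add, map_add, map_add, map_add, hu, hv]

lemma chi_ker
    (hq : Function.Surjective q)
    (hTmul : ∀ i j, 𝒯 i * 𝒯 j = 𝒯 (i + j))
    (hqgr : ∀ i, (𝒯 i).map q.toLinearMap = 𝒜 i)
    (hgen1 : (TW.P 1).gen 1)
    (lam : ↥(𝒯 1) →ₗ[k] (TW.P 1).M)
    (hlamgr : ∀ v, lam v ∈ (TW.P 1).gr 1)
    (hlaminj : Function.Injective lam)
    (hlamsurj : ∀ y ∈ (TW.P 1).gr 1, ∃ v, lam v = y)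
    (chi : T →ₗ[k] (TW.P 1).M)
    (hchiv : ∀ v : ↥(𝒯 1), chi v.1 = lam v)
    (hchib : ∀ (t : T) (v : ↥(𝒯 1)), chi (t * v.1) = q t • lam v)
    (hchic : ∀ (s x : T), cmp 𝒜 0 (q x) = 0 → chi (s * x) = q s • chi x)
    (hchigr : ∀ j, ∀ x ∈ 𝒯 j, chi x ∈ (TW.P 1).gr j) :
    ∀ n, ∀ x ∈ 𝒯 (n + 1), chi x = 0 →
      x ∈ Submodule.span k {y : T | ∃ m kk v, (n + 1 : ℕ) = m + 1 ∧ q kk = 0 ∧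
        kk ∈ 𝒯 m ∧ v ∈ 𝒯 1 ∧ y = kk * v} := by
  classical
  have hqmapgr : ∀ j, ∀ x ∈ 𝒯 j, q.toLinearMap x ∈ 𝒜 j := by
    intro j x hxj; rw [← hqgr j]; exact ⟨x, hxj, rfl⟩
  have hcmpq : ∀ (x : T) (nn : ℕ), cmp 𝒜 nn (q x) = q (cmp 𝒯 nn x) := by
    intro x nn
    exact cmp_map 𝒯 𝒜 q.toLinearMap hqmapgr x nn
  set Vsp : ℕ → Submodule k T := fun nn =>
    Submodule.span k {y : T | ∃ m kk v, nn = m + 1 ∧ q kk = 0 ∧ kk ∈ 𝒯 m ∧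
      v ∈ 𝒯 1 ∧ y = kk * v} with hVsp
  set Tplus : Submodule T T :=
    { carrier := {x : T | cmp 𝒯 0 x = 0}
      add_mem' := fun hx hy => by
        show cmp 𝒯 0 _ = 0
        rw [map_add, hx, hy, add_zero]
      zero_mem' := map_zero _
      smul_mem' := fun t x hx => by
        show cmp 𝒯 0 (t • x) = 0
        rw [smul_eq_mul]
        exact cmp0_mul hx t } with hTplusdef
  have hTplusmem : ∀ x : T, x ∈ Tplus ↔ cmp 𝒯 0 x = 0 := fun x => Iff.rfl
  set Wmod : Submodule T T :=
    Submodule.span T {y : T | ∃ kk v, q kk = 0 ∧ v ∈ 𝒯 1 ∧ y = kk * v} with hWmod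
  have hWle : Wmod ≤ Tplus := by
    rw [hWmod, Submodule.span_le]
    rintro _ ⟨kk, v, hkk, hv, rfl⟩
    show cmp 𝒯 0 (kk * v) = 0
    rw [cmp_mul_right hv]
    simp
  have hVmul : ∀ (i nn : ℕ) (b : T), b ∈ 𝒯 i → ∀ y ∈ Vsp nn, b * y ∈ Vsp (i + nn) := by
    intro i nn b hb y hy
    have hmap : (LinearMap.mulLeft k b) y ∈
        Submodule.map (LinearMap.mulLeft k b) (Vsp nn) := Submodule.mem_map_of_mem hy
    rw [hVsp, Submodule.map_span] at hmap
    have hle : Submodule.span k ((LinearMap.mulLeft k b) ''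
        {y : T | ∃ m kk v, nn = m + 1 ∧ q kk = 0 ∧ kk ∈ 𝒯 m ∧ v ∈ 𝒯 1 ∧ y = kk * v}) ≤
        Vsp (i + nn) := by
      apply Submodule.span_le.mpr
      rintro _ ⟨_, ⟨m, kk, v, hnn, hqkk, hkk, hv, rfl⟩, rfl⟩
      subst hnn
      apply Submodule.subset_span
      refine ⟨i + m, b * kk, v, by omega, ?_, SetLike.mul_mem_graded hb hkk, hv, ?_⟩
      · rw [map_mul, hqkk, mul_zero]
      · show b * (kk * v) = (b * kk) * v
        rw [mul_assoc]
    exact hle hmap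
  have hWcomp : ∀ y ∈ Wmod, ∀ nn, cmp 𝒯 nn y ∈ Vsp nn := by
    intro y hy
    rw [hWmod] at hy
    induction hy using Submodule.span_induction with
    | mem z hz =>
        obtain ⟨kk, v, hqkk, hv, rfl⟩ := hz
        intro nn
        rw [cmp_mul_right hv]
        split
        · rename_i h1n
          apply Submodule.subset_span
          refine ⟨nn - 1, cmp 𝒯 (nn - 1) kk, v, by omega, ?_, cmp_mem _ _ _, hv, rfl⟩
          have h2 : cmp 𝒜 (nn - 1) (q kk) = q (cmp 𝒯 (nn - 1) kk) := hcmpq kk (nn - 1)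
          rw [hqkk, map_zero] at h2
          exact h2.symm
        · exact zero_mem _
    | zero => intro nn; rw [map_zero]; exact zero_mem _
    | add u w _ _ hu hw => intro nn; rw [map_add]; exact add_mem (hu nn) (hw nn)
    | smul t y _ hy' =>
        intro nn
        obtain ⟨s, hs⟩ := cmp_sum 𝒯 t
        have hty : t • y = ∑ i ∈ s, cmp 𝒯 i t * y := by
          rw [smul_eq_mul, ← Finset.sum_mul, ← hs]
        rw [hty, map_sum]
        apply Submodule.sum_mem
        intro i _
        rw [cmp_mul (cmp_mem 𝒯 i t)]
        split
        · rename_i hle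
          have := hVmul i (nn - i) _ (cmp_mem 𝒯 i t) _ (hy' (nn - i))
          rwa [(by omega : i + (nn - i) = nn)] at this
        · exact zero_mem _
  have hVle : ∀ nn, Vsp nn ≤ Wmod.restrictScalars k := by
    intro nn
    rw [hVsp]
    apply Submodule.span_le.mpr
    rintro _ ⟨m, kk, v, hnn, hqkk, hkk, hv, rfl⟩
    exact Submodule.subset_span ⟨kk, v, hqkk, hv, rfl⟩
  have hWmodcmp : ∀ y ∈ Wmod, ∀ nn, cmp 𝒯 nn y ∈ Wmod := by
    intro y hy nn
    exact hVle nn (hWcomp y hy nn)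
  have hKmul : ∀ (t x : T), q t = 0 → cmp 𝒯 0 x = 0 → t * x ∈ Wmod := by
    intro t x hqt hx0
    obtain ⟨s, hs⟩ := cmp_sum 𝒯 x
    have htx : t * x = ∑ i ∈ s, t * cmp 𝒯 i x := by rw [← Finset.mul_sum, ← hs]
    rw [htx]
    apply Submodule.sum_mem
    intro i _
    match i with
    | 0 => rw [hx0, mul_zero]; exact zero_mem _
    | m + 1 =>
        have hmem : cmp 𝒯 (m + 1) x ∈ 𝒯 m * 𝒯 1 := by
          rw [hTmul m 1]; exact cmp_mem _ _ _
        refine Submodule.mul_induction_on (C := fun z => t * z ∈ Wmod) hmem ?_ ?_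
        · intro u hu v hv
          rw [← mul_assoc]
          apply Submodule.subset_span
          exact ⟨t * u, v, by rw [map_mul, hqt, zero_mul], hv, rfl⟩
        · intro z w hz hw
          rw [mul_add]; exact add_mem hz hw
  -- the quotient module Q = T⁺/W
  set W2 : Submodule T ↥Tplus := Wmod.comap Tplus.subtype with hW2
  have hqdiff : ∀ (t t' : T) (z : ↥Tplus ⧸ W2), q t = q t' → t • z = t' • z := by
    intro t t' z h
    obtain ⟨x, rfl⟩ := Submodule.Quotient.mk_surjective _ z
    have hmem : (t - t') • x ∈ W2 := by
      show ((t - t') • x : ↥Tplus).1 ∈ Wmod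
      rw [show (((t - t') • x : ↥Tplus) : T) = (t - t') * x.1 from rfl]
      exact hKmul (t - t') x.1 (by rw [map_sub, h, sub_self]) x.2
    have hsub : (t - t') • (Submodule.Quotient.mk x : ↥Tplus ⧸ W2) = 0 := by
      rw [← Submodule.Quotient.mk_smul, Submodule.Quotient.mk_eq_zero]
      exact hmem
    rw [sub_smul] at hsub
    exact sub_eq_zero.mp hsub
  letI modAQ : Module A (↥Tplus ⧸ W2) :=
    { smul := fun a z => (Function.surjInv hq a) • z
      one_smul := fun z => by
        show (Function.surjInv hq 1) • z = z
        rw [hqdiff _ 1 z (by rw [Function.surjInv_eq hq, map_one]), one_smul]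
      mul_smul := fun a b z => by
        show Function.surjInv hq (a * b) • z =
          Function.surjInv hq a • (Function.surjInv hq b • z)
        rw [← mul_smul]
        apply hqdiff
        rw [Function.surjInv_eq hq, map_mul, Function.surjInv_eq hq,
          Function.surjInv_eq hq]
      smul_zero := fun a => by
        show (Function.surjInv hq a) • (0 : ↥Tplus ⧸ W2) = 0
        rw [smul_zero]
      smul_add := fun a z w => by
        show Function.surjInv hq a • (z + w) =
          Function.surjInv hq a • z + Function.surjInv hq a • w
        rw [smul_add]
      add_smul := fun a b z => by
        show Function.surjInv hq (a + b) • z = _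
        rw [hqdiff _ (Function.surjInv hq a + Function.surjInv hq b) z
          (by rw [Function.surjInv_eq hq, map_add, Function.surjInv_eq hq,
            Function.surjInv_eq hq]), add_smul]
        rfl
      zero_smul := fun z => by
        show Function.surjInv hq 0 • z = 0
        rw [hqdiff _ 0 z (by rw [Function.surjInv_eq hq, map_zero]), zero_smul] }
  have hasmulQ : ∀ (a : A) (z : ↥Tplus ⧸ W2), a • z = (Function.surjInv hq a) • z :=
    fun a z => rfl
  have htsQ : ∀ (t : T) (z : ↥Tplus ⧸ W2), (q t) • z = t • z := by
    intro t z
    rw [hasmulQ]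
    exact hqdiff _ t z (Function.surjInv_eq hq (q t))
  letI modTP : Module T (TW.P 1).M := Module.compHom _ q.toRingHom
  have htsmulP : ∀ (t : T) (p : (TW.P 1).M), t • p = q t • p := fun t p => rfl
  set chiT : ↥Tplus →ₗ[T] (TW.P 1).M :=
    { toFun := fun x => chi x.1
      map_add' := fun x y => by
        show chi ((x + y : ↥Tplus) : T) = _
        rw [Submodule.coe_add, map_add]
      map_smul' := fun t x => by
        show chi ((t • x : ↥Tplus) : T) = t • chi x.1
        rw [show ((t • x : ↥Tplus) : T) = t * x.1 from rfl, htsmulP]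
        refine hchic t x.1 ?_
        rw [hcmpq, show cmp 𝒯 0 x.1 = 0 from x.2, map_zero] } with hchiT
  have hchiW : ∀ y ∈ Wmod, chi y = 0 := by
    intro y hy
    rw [hWmod] at hy
    induction hy using Submodule.span_induction with
    | mem z hz =>
        obtain ⟨kk, v, hqkk, hv, rfl⟩ := hz
        rw [hchib kk ⟨v, hv⟩, hqkk, zero_smul]
    | zero => exact map_zero chi
    | add u w _ _ hu hw => rw [map_add, hu, hw, add_zero]
    | smul t y hy' hyc =>
        rw [smul_eq_mul]
        have hy'' : y ∈ Wmod := by rw [hWmod]; exact hy'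
        have h0 : cmp 𝒜 0 (q y) = 0 := by
          rw [hcmpq, show cmp 𝒯 0 y = 0 from hWle hy'', map_zero]
        rw [hchic t y h0, hyc, smul_zero]
  set chibar : (↥Tplus ⧸ W2) →ₗ[T] (TW.P 1).M := W2.liftQ chiT (by
    intro x hx
    rw [LinearMap.mem_ker]
    show chi x.1 = 0
    exact hchiW x.1 hx) with hchibardef
  have chibar_mk : ∀ x : ↥Tplus, chibar (Submodule.Quotient.mk x) = chi x.1 :=
    fun x => rfl
  have chibarA : ∀ (a : A) (z : ↥Tplus ⧸ W2), chibar (a • z) = a • chibar z := by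
    intro a z
    rw [hasmulQ, map_smul]
    show q (Function.surjInv hq a) • chibar z = a • chibar z
    rw [Function.surjInv_eq hq]
  set chiA : (↥Tplus ⧸ W2) →ₗ[A] (TW.P 1).M :=
    { toFun := chibar
      map_add' := map_add chibar
      map_smul' := chibarA } with hchiA
  have hchiAsurj : Function.Surjective chiA := by
    intro p
    have hrange : ∀ p : (TW.P 1).M, p ∈ LinearMap.range chiA := by
      intro p
      obtain ⟨s, hs⟩ := cmp_sum (TW.P 1).gr p
      rw [hs]
      apply Submodule.sum_mem
      intro j _
      have hj := cmp_mem (TW.P 1).gr j p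
      match j with
      | 0 =>
          have h0 := (gmod_gen_span hgen1 0 _ hj).1 (by omega)
          rw [h0]; exact zero_mem _
      | m + 1 =>
          have hsp := (gmod_gen_span hgen1 (m + 1) _ hj).2
          rw [Nat.add_sub_cancel] at hsp
          have hle : Submodule.span k {x : (TW.P 1).M |
              ∃ a ∈ 𝒜 m, ∃ y ∈ (TW.P 1).gr 1, x = a • y} ≤
              (LinearMap.range chiA).restrictScalars k := by
            apply Submodule.span_le.mpr
            rintro _ ⟨a, ha, y, hy, rfl⟩
            obtain ⟨t, ht, hqt⟩ := by rw [← hqgr m] at ha; exact ha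
            obtain ⟨v, hv⟩ := hlamsurj y hy
            have hmem : t * v.1 ∈ Tplus := by
              show cmp 𝒯 0 (t * v.1) = 0
              rw [cmp_mul_right v.2]
              simp
            refine ⟨Submodule.Quotient.mk (⟨t * v.1, hmem⟩ : ↥Tplus), ?_⟩
            show chi (t * v.1) = a • y
            rw [hchib t v, hv, show q.toLinearMap t = q t from rfl] at *
            rw [hqt]
          exact hle hsp
    exact hrange p
  haveI := TW.proj 1
  obtain ⟨sig, hsig⟩ := Module.projective_lifting_property chiA LinearMap.id hchiAsurj
  have hsigid : ∀ p, chibar (sig p) = p := by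
    intro p
    have := LinearMap.congr_fun hsig p
    exact this
  -- componentwise maps on the quotient
  have hcmpTplus : ∀ (nn : ℕ) (x : ↥Tplus), cmp 𝒯 nn x.1 ∈ Tplus := by
    intro nn x
    show cmp 𝒯 0 (cmp 𝒯 nn x.1) = 0
    match nn with
    | 0 => rw [cmp_same 𝒯 (cmp_mem 𝒯 0 x.1)]; exact x.2
    | m + 1 => exact cmp_ne 𝒯 (cmp_mem 𝒯 (m + 1) x.1) (by omega)
  set Qcmp : ℕ → (↥Tplus ⧸ W2) → (↥Tplus ⧸ W2) := fun nn z =>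
    Quotient.liftOn' z
      (fun x => Submodule.Quotient.mk (⟨cmp 𝒯 nn x.1, hcmpTplus nn x⟩ : ↥Tplus))
      (fun x y hxy => by
        have hxy' : x - y ∈ W2 := (Submodule.quotientRel_def _).mp hxy
        rw [Submodule.Quotient.eq]
        show cmp 𝒯 nn x.1 - cmp 𝒯 nn y.1 ∈ Wmod
        rw [← map_sub]
        exact hWmodcmp _ hxy' nn) with hQcmpdef
  have Qcmp_mk : ∀ (nn : ℕ) (x : ↥Tplus), Qcmp nn (Submodule.Quotient.mk x) =
      Submodule.Quotient.mk (⟨cmp 𝒯 nn x.1, hcmpTplus nn x⟩ : ↥Tplus) :=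
    fun nn x => rfl
  have Qcmp_zero : ∀ nn, Qcmp nn 0 = 0 := by
    intro nn
    have h0 : (0 : ↥Tplus ⧸ W2) = Submodule.Quotient.mk 0 := rfl
    conv_lhs => rw [h0, Qcmp_mk]
    rw [Submodule.Quotient.mk_eq_zero]
    show cmp 𝒯 nn ((0 : ↥Tplus) : T) ∈ Wmod
    rw [ZeroMemClass.coe_zero, map_zero]
    exact zero_mem _
  have Qcmp_add : ∀ (nn : ℕ) (z w : ↥Tplus ⧸ W2),
      Qcmp nn (z + w) = Qcmp nn z + Qcmp nn w := by
    intro nn z w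
    obtain ⟨x, rfl⟩ := Submodule.Quotient.mk_surjective _ z
    obtain ⟨y, rfl⟩ := Submodule.Quotient.mk_surjective _ w
    rw [← Submodule.Quotient.mk_add, Qcmp_mk, Qcmp_mk, Qcmp_mk,
      ← Submodule.Quotient.mk_add]
    congr 1
    apply Subtype.ext
    show cmp 𝒯 nn ((x + y : ↥Tplus) : T) = _
    rw [Submodule.coe_add, map_add]
    rfl
  have Qcmp_smul : ∀ (d nn : ℕ) (t : T), t ∈ 𝒯 d → d ≤ nn →
      ∀ z : ↥Tplus ⧸ W2, Qcmp nn (t • z) = t • Qcmp (nn - d) z := by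
    intro d nn t ht hd z
    obtain ⟨x, rfl⟩ := Submodule.Quotient.mk_surjective _ z
    rw [← Submodule.Quotient.mk_smul, Qcmp_mk, Qcmp_mk, ← Submodule.Quotient.mk_smul]
    congr 1
    apply Subtype.ext
    show cmp 𝒯 nn ((t • x : ↥Tplus) : T) = ((t • _ : ↥Tplus) : T)
    rw [show ((t • x : ↥Tplus) : T) = t * x.1 from rfl, cmp_mul ht, if_pos hd]
    rfl
  -- the degree-1 section identity
  have hrho : ∀ v : ↥(𝒯 1), Qcmp 1 (sig (lam v)) = Submodule.Quotient.mk
      (⟨v.1, show cmp 𝒯 0 v.1 = 0 from cmp_ne 𝒯 v.2 (by omega)⟩ : ↥Tplus) := by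
    intro v
    obtain ⟨x0, hx0⟩ := Submodule.Quotient.mk_surjective _ (sig (lam v))
    rw [← hx0, Qcmp_mk]
    have h2 : chi x0.1 = lam v := by
      have := chibar_mk x0
      rw [hx0, hsigid] at this
      exact this.symm
    have h3 := cmp_map 𝒯 (TW.P 1).gr chi (fun j y hyj => hchigr j y hyj) x0.1 1
    have h1 : chi (cmp 𝒯 1 x0.1) = lam v := by
      rw [← h3, h2, cmp_same (TW.P 1).gr (hlamgr v)]
    have h4 := hchiv ⟨cmp 𝒯 1 x0.1, cmp_mem 𝒯 1 x0.1⟩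
    have h5 : lam ⟨cmp 𝒯 1 x0.1, cmp_mem 𝒯 1 x0.1⟩ = lam v := by
      rw [← h4]
      exact h1
    have h6 := hlaminj h5
    congr 1
    apply Subtype.ext
    show cmp 𝒯 1 x0.1 = v.1
    exact congrArg Subtype.val h6
  -- the main identity
  intro n x hx hchix
  have hxplus : x ∈ Tplus := by
    show cmp 𝒯 0 x = 0
    exact cmp_ne 𝒯 hx (by omega)
  have hx' : x ∈ 𝒯 n * 𝒯 1 := by rw [hTmul n 1]; exact hx
  have hkey : ∀ (y : T), y ∈ 𝒯 n * 𝒯 1 → ∀ hy : y ∈ Tplus,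
      (Submodule.Quotient.mk (⟨y, hy⟩ : ↥Tplus) : ↥Tplus ⧸ W2) =
        Qcmp (n + 1) (sig (chi y)) := by
    intro y hy0
    refine Submodule.mul_induction_on'
      (C := fun r _ => ∀ hy : r ∈ Tplus,
        (Submodule.Quotient.mk (⟨r, hy⟩ : ↥Tplus) : ↥Tplus ⧸ W2) =
          Qcmp (n + 1) (sig (chi r))) ?_ ?_ hy0
    · intro t ht v hv hyp
      rw [hchib t ⟨v, hv⟩]
      have h7 : sig (q t • lam ⟨v, hv⟩) = t • sig (lam ⟨v, hv⟩) := by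
        rw [map_smul]
        exact htsQ t _
      rw [h7, Qcmp_smul n (n + 1) t ht (by omega), (by omega : n + 1 - n = 1),
        hrho ⟨v, hv⟩, ← Submodule.Quotient.mk_smul]
      congr 1
    · intro y1 hy1m y2 hy2m ih1 ih2 hyp
      have hy1T : y1 ∈ 𝒯 (n + 1) := by rw [← hTmul n 1]; exact hy1m
      have hy2T : y2 ∈ 𝒯 (n + 1) := by rw [← hTmul n 1]; exact hy2m
      have hp1 : y1 ∈ Tplus := by
        show cmp 𝒯 0 y1 = 0
        exact cmp_ne 𝒯 hy1T (by omega)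
      have hp2 : y2 ∈ Tplus := by
        show cmp 𝒯 0 y2 = 0
        exact cmp_ne 𝒯 hy2T (by omega)
      have hsplit : (⟨y1 + y2, hyp⟩ : ↥Tplus) = ⟨y1, hp1⟩ + ⟨y2, hp2⟩ :=
        Subtype.ext rfl
      rw [hsplit, Submodule.Quotient.mk_add, ih1 hp1, ih2 hp2, map_add, map_add,
        Qcmp_add]
  have hfinal := hkey x hx' hxplus
  rw [hchix, map_zero, Qcmp_zero] at hfinal
  rw [Submodule.Quotient.mk_eq_zero] at hfinal
  have hxW : x ∈ Wmod := hfinal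
  have hres := hWcomp x hxW (n + 1)
  rwa [cmp_same 𝒯 hx] at hres

end ChiDerived

end Stmt15Aux

open GenK in
/-- if `A` is a Koszul algebra (i.e. `A₀` is a Koszul `A`-module), then
`A` is quadratic: for any presentation `q : T → A` of `A` by the tensor algebra
`T = T_{A₀}(A₁)` of the `(A₀,A₀)`-bimodule `A₁` (characterized by its grading,
by being an isomorphism in degrees `0` and `1`, and by the universal property `hfree`),
the kernel of `q` is generated as a two-sided ideal by its degree-2 component
(which lives in `T_2 = A₁ ⊗_{A₀} A₁`). -/
theorem stmt15 (k A : Type) [Field k] [Ring A] [Algebra k A] (𝒜 : ℕ → Submodule k A)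
    [GradedAlgebra 𝒜]
    (hloc : ∀ i, FiniteDimensional k (𝒜 i))
    (hgen01 : ∀ i j, 𝒜 i * 𝒜 j = 𝒜 (i + j))
    (hsi : SelfInjectiveDegZero k A 𝒜)
    (hKoszul : ∀ Z : GMod k A 𝒜, IsDegZeroPart Z → IsKoszul Z)
    (T : Type) [Ring T] [Algebra k T] (𝒯 : ℕ → Submodule k T) [GradedAlgebra 𝒯]
    (hTmul : ∀ i j, 𝒯 i * 𝒯 j = 𝒯 (i + j))
    (q : T →ₐ[k] A)
    (hq : Function.Surjective q)
    (hqgr : ∀ i, (𝒯 i).map q.toLinearMap = 𝒜 i)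
    (hq01 : ∀ x ∈ (𝒯 0 ⊔ 𝒯 1 : Submodule k T), q x = 0 → x = 0)
    (hfree : ∀ (B : Type) [Ring B] [Algebra k B]
      (g₀ : ↥(𝒯 0) →ₗ[k] B) (g₁ : ↥(𝒯 1) →ₗ[k] B),
      g₀ ⟨1, SetLike.one_mem_graded 𝒯⟩ = 1 →
      (∀ a b : ↥(𝒯 0),
        g₀ ⟨a.1 * b.1, by simpa using SetLike.mul_mem_graded a.2 b.2⟩ = g₀ a * g₀ b) →
      (∀ (a : ↥(𝒯 0)) (m : ↥(𝒯 1)),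
        g₁ ⟨a.1 * m.1, by simpa using SetLike.mul_mem_graded a.2 m.2⟩ = g₀ a * g₁ m) →
      (∀ (m : ↥(𝒯 1)) (a : ↥(𝒯 0)),
        g₁ ⟨m.1 * a.1, by simpa using SetLike.mul_mem_graded m.2 a.2⟩ = g₁ m * g₀ a) →
      ∃! F : T →ₐ[k] B, (∀ a : ↥(𝒯 0), F a.1 = g₀ a) ∧ (∀ m : ↥(𝒯 1), F m.1 = g₁ m)) :
    ∀ x : T, q x = 0 → x ∈ TwoSidedIdeal.span {y : T | q y = 0 ∧ y ∈ 𝒯 2} := by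
  intro x hqx
  classical
  set I := TwoSidedIdeal.span {y : T | q y = 0 ∧ y ∈ 𝒯 2} with hI
  have hZ := Stmt15Aux.Zmod_degzero k A 𝒜 (hloc 0)
  obtain ⟨-, TW, hgen⟩ := hKoszul _ hZ
  have hN0 : IsDegZeroPart (TW.N 0) := by rw [TW.zero]; exact hZ
  obtain ⟨q₀, hq₀s, hq₀k, hgr0⟩ := hN0
  obtain ⟨g, hgb, hggr, hpg⟩ := Stmt15Aux.exists_g TW q₀ hq₀s hq₀k hgr0
  have hN2 := Stmt15Aux.N2span TW (hgen 2)
  obtain ⟨lam, hlamgr, hlam, hlaminj, hlamsurj, hlamA0⟩ :=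
    Stmt15Aux.exists_lam TW q hqgr hq01 q₀ hq₀k g hgb hggr hpg hN2
  obtain ⟨chi, hchiv, hchib, hchic, hchi0⟩ :=
    Stmt15Aux.exists_chi TW q hTmul hqgr hq01 hfree lam hlamA0
  have hchigr := Stmt15Aux.chi_graded TW q hTmul hqgr lam hlamgr chi hchib hchi0
  have hchip1 := Stmt15Aux.chi_p1 TW q hTmul g lam hlam chi hchib
  have hchiker := Stmt15Aux.chi_ker TW q hq hTmul hqgr (hgen 1) lam hlamgr hlaminj
    hlamsurj chi hchiv hchib hchic hchigr
  have hIsmul : ∀ (c : k) (y : T), y ∈ I → c • y ∈ I := by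
    intro c y hy
    rw [Algebra.smul_def]
    exact I.mul_mem_left _ _ hy
  have hqmapgr : ∀ j, ∀ z ∈ 𝒯 j, q.toLinearMap z ∈ 𝒜 j := fun j z hz => by
    rw [← hqgr j]; exact ⟨z, hz, rfl⟩
  have hcmpq : ∀ (z : T) (nn : ℕ),
      Stmt15Aux.cmp 𝒜 nn (q z) = q (Stmt15Aux.cmp 𝒯 nn z) :=
    fun z nn => Stmt15Aux.cmp_map 𝒯 𝒜 q.toLinearMap hqmapgr z nn
  -- the key degreewise claim
  have main : ∀ nn, ∀ z ∈ 𝒯 nn, q z = 0 → z ∈ I := by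
    intro nn
    induction nn using Nat.strong_induction_on with
    | _ nn ih =>
        intro z hz hqz
        rcases nn with _ | nn1
        · rw [hq01 z (Submodule.mem_sup_left hz) hqz]
          exact I.zero_mem
        rcases nn1 with _ | nn2
        · rw [hq01 z (Submodule.mem_sup_right hz) hqz]
          exact I.zero_mem
        rcases nn2 with _ | m
        · exact TwoSidedIdeal.subset_span ⟨hqz, hz⟩
        -- degree m + 3
        have hker : TW.p 1 (chi z) = 0 := by
          have h1 := hchip1 (m + 2) z hz
          rw [hqz, map_zero] at h1
          apply TW.inj 0
          rw [h1, map_zero]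
        have hgrz : chi z ∈ (TW.P 1).gr (m + 3) := hchigr (m + 3) z hz
        have h3 := Stmt15Aux.kerp1_span TW hN2 (m + 1) (chi z) hker hgrz
        have h4 : chi z ∈ Submodule.map chi (Submodule.span k
            {y : T | ∃ t zz, t ∈ 𝒯 (m + 1) ∧ zz ∈ 𝒯 2 ∧ q zz = 0 ∧ y = t * zz}) := by
          refine (Submodule.span_le.mpr ?_) h3
          rintro _ ⟨a, ha, w, hwk, hw2, rfl⟩
          have hw2' := (Stmt15Aux.gmod_gen_span (hgen 1) 2 w hw2).2
          have hle2 : Submodule.span k {xx : (TW.P 1).M |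
              ∃ a' ∈ 𝒜 (2 - 1), ∃ y ∈ (TW.P 1).gr 1, xx = a' • y} ≤
              Submodule.map chi (𝒯 2) := by
            apply Submodule.span_le.mpr
            rintro _ ⟨a', ha', y, hy, rfl⟩
            rw [show (2 : ℕ) - 1 = 1 from rfl] at ha'
            have ha'' : a' ∈ (𝒯 1).map q.toLinearMap := by rw [hqgr 1]; exact ha'
            obtain ⟨t', ht', hqt'⟩ := ha''
            obtain ⟨v, hv⟩ := hlamsurj y hy
            refine ⟨t' * v.1, ?_, ?_⟩
            · have := SetLike.mul_mem_graded ht' v.2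
              simpa using this
            · rw [hchib t' v, hv]
              rw [show q.toLinearMap t' = q t' from rfl] at hqt'
              rw [hqt']
          have hw := hle2 hw2'
          obtain ⟨z0, hz02, hz0chi⟩ := hw
          have hqz0 : q z0 = 0 := by
            have h5 := hchip1 1 z0 hz02
            rw [hz0chi, hwk, map_zero] at h5
            apply hgb.1
            rw [← h5, map_zero]
          have haa : a ∈ (𝒯 (m + 1)).map q.toLinearMap := by rw [hqgr (m + 1)]; exact ha
          obtain ⟨t, ht, hqt⟩ := haa
          refine ⟨t * z0, ?_, ?_⟩
          · exact Submodule.subset_span ⟨t, z0, ht, hz02, hqz0, rfl⟩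
          · rw [hchic t z0 (by rw [hqz0, map_zero]), hz0chi]
            rw [show q.toLinearMap t = q t from rfl] at hqt
            rw [hqt]
        obtain ⟨x2, hx2G, hx2chi⟩ := h4
        have hx2T : x2 ∈ 𝒯 (m + 3) := by
          have hle3 : Submodule.span k
              {y : T | ∃ t zz, t ∈ 𝒯 (m + 1) ∧ zz ∈ 𝒯 2 ∧ q zz = 0 ∧ y = t * zz} ≤
              𝒯 (m + 3) := by
            apply Submodule.span_le.mpr
            rintro _ ⟨t, zz, ht, hzz, hqzz, rfl⟩
            have := SetLike.mul_mem_graded ht hzz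
            simpa using this
          exact hle3 hx2G
        have hdiffchi : chi (z - x2) = 0 := by rw [map_sub, hx2chi, sub_self]
        have hmemdiff : z - x2 ∈ 𝒯 (m + 3) := sub_mem hz hx2T
        have h6 := hchiker (m + 2) (z - x2) hmemdiff hdiffchi
        have hGI : ∀ y ∈ Submodule.span k
            {y : T | ∃ t zz, t ∈ 𝒯 (m + 1) ∧ zz ∈ 𝒯 2 ∧ q zz = 0 ∧ y = t * zz}, y ∈ I := by
          intro y hymem
          induction hymem using Submodule.span_induction with
          | mem y hy =>
              obtain ⟨t, zz, ht, hzz, hqzz, rfl⟩ := hy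
              exact I.mul_mem_left _ _ (TwoSidedIdeal.subset_span ⟨hqzz, hzz⟩)
          | zero => exact I.zero_mem
          | add u w _ _ hu hw => exact I.add_mem hu hw
          | smul c y _ hy => exact hIsmul c y hy
        have hVI : ∀ y ∈ Submodule.span k {y : T | ∃ mm kk v, (m + 2 : ℕ) + 1 = mm + 1 ∧
            q kk = 0 ∧ kk ∈ 𝒯 mm ∧ v ∈ 𝒯 1 ∧ y = kk * v}, y ∈ I := by
          intro y hymem
          induction hymem using Submodule.span_induction with
          | mem y hy =>
              obtain ⟨mm, kk, v, hmm, hqkk, hkk, hv, rfl⟩ := hy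
              have hmm' : mm = m + 2 := by omega
              subst hmm'
              exact I.mul_mem_right _ _ (ih (m + 2) (by omega) kk hkk hqkk)
          | zero => exact I.zero_mem
          | add u w _ _ hu hw => exact I.add_mem hu hw
          | smul c y _ hy => exact hIsmul c y hy
        have hx2I : x2 ∈ I := hGI x2 hx2G
        have hdiffI : z - x2 ∈ I := hVI (z - x2) h6
        have hzdecomp : z = (z - x2) + x2 := by abel
        rw [hzdecomp]
        exact I.add_mem hdiffI hx2I
  -- conclude by decomposing x
  obtain ⟨s, hs⟩ := Stmt15Aux.cmp_sum 𝒯 x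
  rw [hs]
  have hsum : ∀ s' : Finset ℕ, (∑ n ∈ s', Stmt15Aux.cmp 𝒯 n x) ∈ I := by
    intro s'
    induction s' using Finset.induction_on with
    | empty => simpa using I.zero_mem
    | @insert n s2 hnm ih =>
        rw [Finset.sum_insert hnm]
        refine I.add_mem (main n _ (Stmt15Aux.cmp_mem 𝒯 n x) ?_) ih
        have := hcmpq x n
        rw [hqx, map_zero] at this
        exact this.symm
  exact hsum s
end
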